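/- arXiv:2602.22864 — 12 statements merged into one kernel-verified Lean document; each statement's English description precedes it below -/
import Mathlib

section
/- Let G be a transitive group of permutations of a set Ω. Then G is primitive if and only if every non-trivial G-invariant topology on Ω is T0. -/
/-- A topology on `Ω` is invariant under a group `G` of permutations of `Ω`
if every element of `G` is a homeomorphism. -/
def TopInvariant {Ω : Type*} (G : Subgroup (Equiv.Perm Ω)) (τ : TopologicalSpace Ω) : Prop :=
  ∀ g ∈ G, ∀ s : Set Ω, τ.IsOpen s ↔ τ.IsOpen (g '' s)

/-- A topology on `Ω` is trivial if it is invariant under every permutation of `Ω`. -/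
def TopTrivial {Ω : Type*} (τ : TopologicalSpace Ω) : Prop :=
  ∀ (g : Equiv.Perm Ω) (s : Set Ω), τ.IsOpen s ↔ τ.IsOpen (g '' s)

/-- A group of permutations is transitive. -/
def SubgroupTransitive {Ω : Type*} (G : Subgroup (Equiv.Perm Ω)) : Prop :=
  ∀ x y : Ω, ∃ g ∈ G, g x = y

/-- A group of permutations is primitive: it is transitive and the only
`G`-invariant equivalence relations are equality and the universal relation. -/
def SubgroupPrimitive {Ω : Type*} (G : Subgroup (Equiv.Perm Ω)) : Prop :=
  SubgroupTransitive G ∧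
    ∀ r : Ω → Ω → Prop, Equivalence r →
      (∀ g ∈ G, ∀ x y : Ω, r x y → r (g x) (g y)) →
      (∀ x y : Ω, r x y ↔ x = y) ∨ (∀ x y : Ω, r x y)

theorem primitive_iff_invariant_topologies_T0 {Ω : Type*} (G : Subgroup (Equiv.Perm Ω))
    (hG : SubgroupTransitive G) :
    SubgroupPrimitive G ↔
      ∀ τ : TopologicalSpace Ω, TopInvariant G τ → ¬ TopTrivial τ → @T0Space Ω τ := by
  classical
  constructor
  · rintro ⟨-, hprim⟩ τ hinv hnt
    letI := τ
    set r : Ω → Ω → Prop := fun x y => ∀ s : Set Ω, IsOpen s → (x ∈ s ↔ y ∈ s) with hrdef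
    have hequiv : Equivalence r :=
      ⟨fun x s _ => Iff.rfl, fun h s hs => (h s hs).symm,
        fun h h' s hs => (h s hs).trans (h' s hs)⟩
    have hginv : ∀ g ∈ G, ∀ x y, r x y → r (g x) (g y) := by
      intro g hg x y hxy s hs
      have h2 : IsOpen ((g⁻¹ : Equiv.Perm Ω) '' s) := (hinv g⁻¹ (inv_mem hg) s).mp hs
      have h3 := hxy _ h2
      have hx : ∀ z : Ω, z ∈ (g⁻¹ : Equiv.Perm Ω) '' s ↔ g z ∈ s := by
        intro z
        constructor
        · rintro ⟨w, hw, rfl⟩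
          simpa using hw
        · intro hz
          exact ⟨g z, hz, by simp⟩
      rw [hx, hx] at h3
      exact h3
    rcases hprim r hequiv hginv with heq | huniv
    · constructor
      intro x y hxy
      rw [inseparable_iff_forall_isOpen] at hxy
      exact (heq x y).mp hxy
    · exfalso
      apply hnt
      intro g s
      have hopen : ∀ t : Set Ω, IsOpen t → t = ∅ ∨ t = Set.univ := by
        intro t ht
        rcases t.eq_empty_or_nonempty with h | ⟨x, hx⟩
        · exact Or.inl h
        · right; ext y; simp only [Set.mem_univ, iff_true]
          exact (huniv x y t ht).mp hx
      constructor
      · intro hs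
        rcases hopen s hs with rfl | rfl
        · simp only [Set.image_empty]; exact isOpen_empty
        · rw [Set.image_univ, g.surjective.range_eq]; exact isOpen_univ
      · intro hs
        rcases hopen _ hs with h | h
        · rw [Set.image_eq_empty] at h
          rw [h]; exact isOpen_empty
        · have : s = Set.univ := by
            have := congrArg (fun t => (g.symm : Equiv.Perm Ω) '' t) h
            simpa [Equiv.symm_image_image, Set.image_univ, g.symm.surjective.range_eq] using this
          rw [this]; exact isOpen_univ
  · intro hT0
    refine ⟨hG, ?_⟩
    intro r hr hrinv
    by_cases heq : ∀ x y : Ω, r x y ↔ x = y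
    · exact Or.inl heq
    · right
      push_neg at heq
      obtain ⟨x₀, y₀, hne⟩ := heq
      have hxy' : r x₀ y₀ ∧ x₀ ≠ y₀ := by
        rcases hne with h | ⟨h1, h2⟩
        · exact h
        · exact absurd (h2 ▸ hr.refl x₀) h1
      obtain ⟨hx0y0, hne0⟩ := hxy'
      -- the saturated topology
      let τ : TopologicalSpace Ω :=
        { IsOpen := fun s => ∀ x y : Ω, r x y → (x ∈ s ↔ y ∈ s)
          isOpen_univ := fun _ _ _ => by simp
          isOpen_inter := fun s t hs ht x y hxy => by
            simp only [Set.mem_inter_iff, hs x y hxy, ht x y hxy]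
          isOpen_sUnion := fun S hS x y hxy => by
            simp only [Set.mem_sUnion]
            exact exists_congr fun t => and_congr_right fun ht => hS t ht x y hxy }
      have hopen_iff : ∀ s : Set Ω, τ.IsOpen s ↔ ∀ x y : Ω, r x y → (x ∈ s ↔ y ∈ s) :=
        fun s => Iff.rfl
      have himg : ∀ (g : Equiv.Perm Ω) (s : Set Ω) (z : Ω), z ∈ g '' s ↔ g.symm z ∈ s := by
        intro g s z
        constructor
        · rintro ⟨w, hw, rfl⟩; simpa using hw
        · intro hz; exact ⟨g.symm z, hz, by simp⟩
      have hinv : TopInvariant G τ := by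
        intro g hg s
        rw [hopen_iff, hopen_iff]
        constructor
        · intro hs x y hxy
          rw [himg, himg]
          exact hs _ _ (hrinv g⁻¹ (inv_mem hg) x y hxy)
        · intro hs x y hxy
          have := hs (g x) (g y) (hrinv g hg x y hxy)
          rw [himg, himg] at this
          simpa using this
      have hnotT0 : ¬ @T0Space Ω τ := by
        intro hT
        have hins : @Inseparable Ω τ x₀ y₀ := by
          rw [@inseparable_iff_forall_isOpen Ω τ]
          intro s hs
          exact hs x₀ y₀ hx0y0
        letI := τ
        haveI := hT
        exact hne0 hins.eq
      have htriv : TopTrivial τ := by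
        by_contra h
        exact hnotT0 (hT0 τ hinv h)
      -- now show r is universal
      intro a b
      by_contra hab
      have hab' : a ≠ b := fun he => hab (he ▸ hr.refl a)
      set S : Set Ω := {z | r a z} with hS
      have hSopen : τ.IsOpen S := by
        rw [hopen_iff]
        intro x y hxy
        exact ⟨fun hx => hr.trans hx hxy, fun hy => hr.trans hy (hr.symm hxy)⟩
      set b' := Equiv.swap a x₀ b with hb'
      set g : Equiv.Perm Ω := Equiv.swap b' y₀ * Equiv.swap a x₀ with hg
      have hb'x : b' ≠ x₀ := by
        intro h
        apply hab'
        have := congrArg (Equiv.swap a x₀) h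
        rw [Equiv.swap_apply_self, Equiv.swap_apply_right] at this
        exact this.symm
      have hga : g a = x₀ := by
        simp only [hg, Equiv.Perm.mul_apply, Equiv.swap_apply_left]
        exact Equiv.swap_apply_of_ne_of_ne (Ne.symm hb'x) hne0
      have hgb : g b = y₀ := by
        simp only [hg, Equiv.Perm.mul_apply, ← hb', Equiv.swap_apply_left]
      have himgopen : τ.IsOpen (g '' S) := (htriv g S).mp hSopen
      have hx0mem : x₀ ∈ g '' S := ⟨a, hr.refl a, hga⟩
      have hy0mem : y₀ ∈ g '' S := ((hopen_iff _).mp himgopen x₀ y₀ hx0y0).mp hx0mem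
      obtain ⟨z, hz, hgz⟩ := hy0mem
      have : z = b := g.injective (hgz.trans hgb.symm)
      exact hab (this ▸ hz)
end

section
/- Let G be a transitive group of permutations of a set Ω. Then G is strongly primitive if and only if every non-trivial G-invariant topology on Ω is T1. -/
/-- A group of permutations is strongly primitive: it is transitive and the only
`G`-invariant preorders (reflexive and transitive relations) on `Ω` are
equality and the universal relation. -/
def SubgroupStronglyPrimitive {Ω : Type*} (G : Subgroup (Equiv.Perm Ω)) : Prop :=
  SubgroupTransitive G ∧
    ∀ r : Ω → Ω → Prop, Reflexive r → Transitive r →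
      (∀ g ∈ G, ∀ x y : Ω, r x y → r (g x) (g y)) →
      (∀ x y : Ω, r x y ↔ x = y) ∨ (∀ x y : Ω, r x y)

/-- `Sym(Ω)` is 2-transitive. -/
lemma exists_perm_two {Ω' : Type*} [DecidableEq Ω'] (a b x y : Ω') (hab : a ≠ b) (hxy : x ≠ y) :
    ∃ g : Equiv.Perm Ω', g a = x ∧ g b = y := by
  set b' := Equiv.swap a x b with hb'
  have hbx : b' ≠ x := by
    intro h
    apply hab
    have : Equiv.swap a x b = Equiv.swap a x a := by rw [← hb', h, Equiv.swap_apply_left]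
    exact ((Equiv.swap a x).injective this).symm ▸ rfl
  refine ⟨Equiv.swap b' y * Equiv.swap a x, ?_, ?_⟩
  · simp only [Equiv.Perm.mul_apply, Equiv.swap_apply_left]
    exact Equiv.swap_apply_of_ne_of_ne hbx.symm hxy
  · simp only [Equiv.Perm.mul_apply, ← hb', Equiv.swap_apply_left]

theorem stronglyPrimitive_iff_invariant_topologies_T1 {Ω : Type*} (G : Subgroup (Equiv.Perm Ω))
    (hG : SubgroupTransitive G) :
    SubgroupStronglyPrimitive G ↔
      ∀ τ : TopologicalSpace Ω, TopInvariant G τ → ¬ TopTrivial τ → @T1Space Ω τ := by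
  classical
  have key : ∀ (τ : TopologicalSpace Ω) (g : Equiv.Perm Ω),
      (∀ s : Set Ω, τ.IsOpen s ↔ τ.IsOpen (g '' s)) →
      ∀ x y : Ω, (∀ U, τ.IsOpen U → y ∈ U → x ∈ U) →
        (∀ U, τ.IsOpen U → g y ∈ U → g x ∈ U) := by
    intro τ g hg x y hxy U hU hyU
    have himg : g '' ((g⁻¹ : Equiv.Perm Ω) '' U) = U := by
      ext z
      simp
    have h1 : τ.IsOpen ((g⁻¹ : Equiv.Perm Ω) '' U) := by
      rw [hg ((g⁻¹ : Equiv.Perm Ω) '' U), himg]; exact hU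
    have hy' : y ∈ (g⁻¹ : Equiv.Perm Ω) '' U := ⟨g y, hyU, by simp⟩
    have hx' := hxy _ h1 hy'
    rcases hx' with ⟨u, hu, hux⟩
    have : g x = u := by rw [← hux]; simp
    rwa [this]
  constructor
  · rintro ⟨-, hsp⟩ τ hinv hnt
    set r : Ω → Ω → Prop := fun x y => ∀ U, τ.IsOpen U → y ∈ U → x ∈ U with hr
    have hrefl : Reflexive r := fun x U _ h => h
    have htrans : Transitive r := fun x y z hxy hyz U hU hz => hxy U hU (hyz U hU hz)
    have hginv : ∀ g ∈ G, ∀ x y, r x y → r (g x) (g y) := by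
      intro g hg x y hxy
      exact key τ g (hinv g hg) x y hxy
    rcases hsp r hrefl htrans hginv with heq | huniv
    · letI := τ
      rw [t1Space_iff_exists_open]
      intro x y hxy
      have h1 : ¬ r y x := by rw [heq]; exact fun h => hxy h.symm
      by_contra hc
      push_neg at hc
      exact h1 (fun U hU hxU => hc U hU hxU)
    · exfalso
      apply hnt
      have hopen : ∀ s : Set Ω, τ.IsOpen s → s = ∅ ∨ s = Set.univ := by
        intro s hs
        rcases Set.eq_empty_or_nonempty s with h | ⟨z, hz⟩
        · exact Or.inl h
        · right
          ext w
          simp only [Set.mem_univ, iff_true]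
          exact huniv w z s hs hz
      intro g s
      letI := τ
      have hE : IsOpen (∅ : Set Ω) := isOpen_empty
      have hU : IsOpen (Set.univ : Set Ω) := isOpen_univ
      constructor
      · intro hs
        rcases hopen s hs with rfl | rfl
        · rw [Set.image_empty]; exact hE
        · rw [Set.image_univ, Equiv.range_eq_univ]; exact hU
      · intro hs
        rcases hopen _ hs with h | h
        · have : s = ∅ := by
            rcases Set.eq_empty_or_nonempty s with h' | ⟨z, hz⟩
            · exact h'
            · exact absurd (Set.eq_empty_iff_forall_notMem.mp h (g z) ⟨z, hz, rfl⟩) (fun c => c)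
          rw [this]; exact hE
        · have : s = Set.univ := by
            ext w
            simp only [Set.mem_univ, iff_true]
            have : g w ∈ g '' s := h ▸ Set.mem_univ _
            rcases this with ⟨u, hu, huw⟩
            rwa [← g.injective huw]
          rw [this]; exact hU
  · intro H
    refine ⟨hG, ?_⟩
    intro r hrefl htrans hginv
    -- Alexandrov topology: open sets are down-closed under r
    set τ : TopologicalSpace Ω :=
      { IsOpen := fun s => ∀ x y : Ω, r x y → y ∈ s → x ∈ s
        isOpen_univ := fun _ _ _ _ => Set.mem_univ _
        isOpen_inter := fun s t hs ht x y hxy hy => ⟨hs x y hxy hy.1, ht x y hxy hy.2⟩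
        isOpen_sUnion := fun S hS x y hxy hy => by
          rcases hy with ⟨t, htS, hyt⟩
          exact ⟨t, htS, hS t htS x y hxy hyt⟩ } with hτ
    have hopen_iff : ∀ s : Set Ω, τ.IsOpen s ↔ ∀ x y : Ω, r x y → y ∈ s → x ∈ s := by
      intro s; rfl
    -- r is recoverable from τ
    have hrecov : ∀ x y : Ω, r x y ↔ ∀ U, τ.IsOpen U → y ∈ U → x ∈ U := by
      intro x y
      constructor
      · intro hxy U hU hyU
        exact (hopen_iff U).mp hU x y hxy hyU
      · intro h
        refine h {z | r z y} ?_ (hrefl y)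
        rw [hopen_iff]
        intro a b hab hb
        exact htrans hab hb
    have hinv_img : ∀ g : Equiv.Perm Ω,
        (∀ x y : Ω, r x y → r ((g⁻¹ : Equiv.Perm Ω) x) ((g⁻¹ : Equiv.Perm Ω) y)) →
        ∀ s : Set Ω, τ.IsOpen s → τ.IsOpen (g '' s) := by
      intro g hgr s hs
      rw [hopen_iff] at hs ⊢
      rintro x y hxy ⟨y', hy', rfl⟩
      have h1 : r ((g⁻¹ : Equiv.Perm Ω) x) y' := by
        have := hgr x (g y') hxy
        simpa using this
      exact ⟨(g⁻¹ : Equiv.Perm Ω) x, hs _ _ h1 hy', by simp⟩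
    have hinvG : TopInvariant G τ := by
      intro g hg s
      constructor
      · exact hinv_img g (fun x y hxy => hginv g⁻¹ (inv_mem hg) x y hxy) s
      · intro hs
        have h2 := hinv_img g⁻¹ (fun x y hxy => by
          simpa using hginv g hg x y hxy) (g '' s) hs
        have : (g⁻¹ : Equiv.Perm Ω) '' (g '' s) = s := by
          ext z; simp
        rwa [this] at h2
    by_cases htv : TopTrivial τ
    · -- τ is trivial, so r is invariant under ALL permutations
      have hall : ∀ (g : Equiv.Perm Ω) (x y : Ω), r x y → r (g x) (g y) := by
        intro g x y hxy
        rw [hrecov] at hxy ⊢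
        exact key τ g (htv g) x y hxy
      by_cases hex : ∃ a b : Ω, a ≠ b ∧ r a b
      · right
        rcases hex with ⟨a, b, hab, hrab⟩
        intro x y
        by_cases hxy : x = y
        · exact hxy ▸ hrefl x
        · rcases exists_perm_two a b x y hab hxy with ⟨g, hga, hgb⟩
          have := hall g a b hrab
          rwa [hga, hgb] at this
      · left
        push_neg at hex
        intro x y
        constructor
        · intro hxy
          by_contra hne
          exact hex x y hne hxy
        · rintro rfl; exact hrefl x
    · -- τ is non-trivial, hence T1, hence r is equality
      have hT1 : @T1Space Ω τ := H τ hinvG htv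
      left
      intro x y
      constructor
      · intro hxy
        by_contra hne
        letI := τ
        have hU : τ.IsOpen ({x}ᶜ : Set Ω) := isOpen_compl_singleton
        have := (hopen_iff _).mp hU x y hxy (by simp [Ne.symm hne])
        simp at this
      · rintro rfl; exact hrefl x
end

section
/- Let G be a primitive group of permutations of a countably infinite set Ω. Then G preserves a topology on Ω that is not discrete and has an open set which is neither empty nor cofinite, if and only if there exists a moiety Δ of Ω such that for all g₁, …, gₙ ∈ G the set Δg₁ ∩ ⋯ ∩ Δgₙ is empty or infinite. -/
/-- A moiety of a countably infinite set: a subset that is infinite and co-infinite. -/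
def IsMoiety {Ω : Type*} (Δ : Set Ω) : Prop :=
  Δ.Infinite ∧ Δᶜ.Infinite

lemma open_nonempty_infinite {Ω : Type*} [Infinite Ω]
    (G : Subgroup (Equiv.Perm Ω)) (hG : SubgroupPrimitive G) (τ : TopologicalSpace Ω)
    (hinv : TopInvariant G τ) (hbot : τ ≠ ⊥) :
    ∀ U : Set Ω, τ.IsOpen U → U.Nonempty → U.Infinite := by
  classical
  letI := τ
  by_contra hcon
  push_neg at hcon
  obtain ⟨U, hUopen, hUne, hUinf⟩ := hcon
  have hP : ∃ n, ∃ V : Set Ω, IsOpen V ∧ V.Nonempty ∧ V.Finite ∧ V.ncard = n :=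
    ⟨U.ncard, U, hUopen, hUne, hUinf, rfl⟩
  obtain ⟨V, hVopen, hVne, hVfin, hVcard⟩ := Nat.find_spec hP
  set n := Nat.find hP with hn
  have hmin : ∀ W : Set Ω, IsOpen W → W.Nonempty → W.Finite → n ≤ W.ncard := by
    intro W h1 h2 h3
    exact Nat.find_min' hP ⟨W, h1, h2, h3, rfl⟩
  have htrop : ∀ g ∈ G, IsOpen ((g : Equiv.Perm Ω) '' V) := fun g hg => (hinv g hg V).1 hVopen
  -- two translates of V are equal or disjoint
  have hdisj : ∀ g ∈ G, ∀ h ∈ G, ((g : Equiv.Perm Ω) '' V ∩ h '' V).Nonempty →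
      (g : Equiv.Perm Ω) '' V = h '' V := by
    intro g hg h hh hne'
    have hop : IsOpen ((g : Equiv.Perm Ω) '' V ∩ h '' V) := (htrop g hg).inter (htrop h hh)
    have hfing : ((g : Equiv.Perm Ω) '' V).Finite := hVfin.image _
    have hfinh : ((h : Equiv.Perm Ω) '' V).Finite := hVfin.image _
    have hfin : ((g : Equiv.Perm Ω) '' V ∩ h '' V).Finite :=
      hfing.subset Set.inter_subset_left
    have hcardg : ((g : Equiv.Perm Ω) '' V).ncard = n := by
      rw [Set.ncard_image_of_injective V g.injective, hVcard]
    have hcardh : ((h : Equiv.Perm Ω) '' V).ncard = n := by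
      rw [Set.ncard_image_of_injective V h.injective, hVcard]
    have hle := hmin _ hop hne' hfin
    have h1 : (g : Equiv.Perm Ω) '' V ∩ h '' V = g '' V :=
      Set.eq_of_subset_of_ncard_le Set.inter_subset_left (by omega) hfing
    have h2 : (g : Equiv.Perm Ω) '' V ∩ h '' V = h '' V :=
      Set.eq_of_subset_of_ncard_le Set.inter_subset_right (by omega) hfinh
    rw [← h1, h2]
  have hone : (1 : Equiv.Perm Ω) '' V = V := by simp
  have hcover : ∀ x : Ω, ∃ g ∈ G, x ∈ (g : Equiv.Perm Ω) '' V := by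
    obtain ⟨v, hv⟩ := hVne
    intro x
    obtain ⟨g, hg, hgx⟩ := hG.1 v x
    exact ⟨g, hg, v, hv, hgx⟩
  set r : Ω → Ω → Prop :=
    fun x y => ∃ g ∈ G, x ∈ (g : Equiv.Perm Ω) '' V ∧ y ∈ (g : Equiv.Perm Ω) '' V with hr
  have hrequiv : Equivalence r := by
    constructor
    · intro x
      obtain ⟨g, hg, hx⟩ := hcover x
      exact ⟨g, hg, hx, hx⟩
    · rintro x y ⟨g, hg, hx, hy⟩
      exact ⟨g, hg, hy, hx⟩
    · rintro x y z ⟨g, hg, hx, hy⟩ ⟨h, hh, hy', hz⟩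
      have heq : (g : Equiv.Perm Ω) '' V = h '' V := hdisj g hg h hh ⟨y, hy, hy'⟩
      exact ⟨h, hh, heq ▸ hx, hz⟩
  have hrinv : ∀ k ∈ G, ∀ x y : Ω, r x y → r (k x) (k y) := by
    rintro k hk x y ⟨g, hg, hx, hy⟩
    have himg : ((k * g : Equiv.Perm Ω)) '' V = k '' ((g : Equiv.Perm Ω) '' V) := by
      rw [Equiv.Perm.coe_mul, Set.image_comp]
    exact ⟨k * g, mul_mem hk hg, himg ▸ Set.mem_image_of_mem k hx,
      himg ▸ Set.mem_image_of_mem k hy⟩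
  rcases hG.2 r hrequiv hrinv with heq | huniv
  · -- V is a singleton, so the topology is discrete
    obtain ⟨v, hv⟩ := hVne
    have hVsing : V = {v} := by
      apply Set.eq_singleton_iff_unique_mem.2 ⟨hv, ?_⟩
      intro x hx
      exact (heq x v).1 ⟨1, one_mem G, ⟨x, hx, rfl⟩, ⟨v, hv, rfl⟩⟩
    have hsing : ∀ y : Ω, IsOpen ({y} : Set Ω) := by
      intro y
      obtain ⟨g, hg, hgy⟩ := hG.1 v y
      have : (g : Equiv.Perm Ω) '' V = {y} := by
        rw [hVsing, Set.image_singleton, hgy]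
      exact this ▸ htrop g hg
    have : ∀ s : Set Ω, IsOpen s := by
      intro s
      have : s = ⋃ y ∈ s, ({y} : Set Ω) := by simp
      rw [this]
      exact isOpen_biUnion fun y _ => hsing y
    exact hbot (discreteTopology_iff_forall_isOpen.2 this).eq_bot
  · -- universal relation: V = univ, contradicting finiteness
    obtain ⟨v, hv⟩ := hVne
    have hall : ∀ y, y ∈ V := by
      intro y
      obtain ⟨g, hg, hvg, hyg⟩ := huniv v y
      have : (g : Equiv.Perm Ω) '' V = (1 : Equiv.Perm Ω) '' V :=
        hdisj g hg 1 (one_mem G) ⟨v, hvg, ⟨v, hv, rfl⟩⟩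
      rw [this, hone] at hyg
      exact hyg
    exact Set.infinite_univ (Set.eq_univ_of_forall hall ▸ hVfin)

theorem invariant_topology_iff_moiety {Ω : Type*} [Countable Ω] [Infinite Ω]
    (G : Subgroup (Equiv.Perm Ω)) (hG : SubgroupPrimitive G) :
    (∃ τ : TopologicalSpace Ω, TopInvariant G τ ∧ τ ≠ ⊥ ∧
        ∃ s : Set Ω, τ.IsOpen s ∧ s.Nonempty ∧ sᶜ.Infinite) ↔
      (∃ Δ : Set Ω, IsMoiety Δ ∧
        ∀ (n : ℕ) (g : Fin n → G),
          (⋂ i, (g i : Equiv.Perm Ω) '' Δ) = ∅ ∨ (⋂ i, (g i : Equiv.Perm Ω) '' Δ).Infinite) := by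
  classical
  constructor
  · rintro ⟨τ, hinv, hbot, s, hs, hsne, hsc⟩
    have key := open_nonempty_infinite G hG τ hinv hbot
    refine ⟨s, ⟨key s hs hsne, hsc⟩, ?_⟩
    intro n g
    have hopen : τ.IsOpen (⋂ i, (g i : Equiv.Perm Ω) '' s) := by
      letI := τ
      exact isOpen_iInter_of_finite fun i => (hinv (g i) (g i).2 s).1 hs
    rcases Set.eq_empty_or_nonempty (⋂ i, (g i : Equiv.Perm Ω) '' s) with h | h
    · exact Or.inl h
    · exact Or.inr (key _ hopen h)
  · rintro ⟨Δ, ⟨hΔinf, hΔcinf⟩, hΔ⟩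
    set S : Set (Set Ω) := {T | ∃ g ∈ G, T = (g : Equiv.Perm Ω) '' Δ} with hS
    set τ := TopologicalSpace.generateFrom S with hτ
    letI := τ
    have hmono : ∀ g ∈ G, ∀ s : Set Ω, TopologicalSpace.GenerateOpen S s →
        TopologicalSpace.GenerateOpen S ((g : Equiv.Perm Ω) '' s) := by
      intro g hg s hs
      induction hs with
      | basic t ht =>
        obtain ⟨h, hh, rfl⟩ := ht
        refine TopologicalSpace.GenerateOpen.basic _ ⟨g * h, mul_mem hg hh, ?_⟩
        rw [Equiv.Perm.coe_mul, Set.image_comp]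
      | univ =>
        rw [Set.image_univ, Equiv.range_eq_univ]
        exact TopologicalSpace.GenerateOpen.univ
      | inter u v hu hv ihu ihv =>
        rw [Set.image_inter g.injective]
        exact TopologicalSpace.GenerateOpen.inter _ _ ihu ihv
      | sUnion K hK ih =>
        rw [Set.image_sUnion]
        exact TopologicalSpace.GenerateOpen.sUnion _ (by rintro t ⟨u, hu, rfl⟩; exact ih u hu)
    have hinv : TopInvariant G τ := by
      intro g hg s
      constructor
      · exact hmono g hg s
      · intro h
        have h2 := hmono g⁻¹ (inv_mem hg) _ h
        have : ((g⁻¹ : Equiv.Perm Ω)) '' ((g : Equiv.Perm Ω) '' s) = s := by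
          rw [Equiv.Perm.inv_def, Equiv.symm_image_image]
        rwa [this] at h2
    have basis := TopologicalSpace.isTopologicalBasis_of_subbasis (t := τ) hτ
    have key : ∀ u : Set Ω, τ.IsOpen u → u.Nonempty → u.Infinite := by
      rintro u hu ⟨x, hx⟩
      obtain ⟨v, ⟨f, ⟨hffin, hfS⟩, rfl⟩, hxv, hvu⟩ := basis.exists_subset_of_mem_open hx hu
      haveI : Fintype f := hffin.fintype
      choose c hc hceq using fun t : f => hfS t.2
      set m := Fintype.card f with hm
      set e := (Fintype.equivFin f).symm with he
      set g : Fin m → G := fun i => ⟨c (e i), hc (e i)⟩ with hgdef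
      have hEq : (⋂ i, ((g i : Equiv.Perm Ω)) '' Δ) = ⋂₀ f := by
        rw [Set.sInter_eq_iInter]
        calc (⋂ i, ((g i : Equiv.Perm Ω)) '' Δ)
            = ⋂ t : f, (c t) '' Δ := e.surjective.iInter_comp (fun t => (c t) '' Δ)
          _ = ⋂ t : f, (t : Set Ω) := Set.iInter_congr fun t => (hceq t).symm
      have hxv' : x ∈ ⋂₀ f := hxv
      have hvu' : ⋂₀ f ⊆ u := hvu
      rcases hΔ m g with h | h
      · rw [hEq] at h
        exact absurd (h ▸ hxv') (Set.notMem_empty x)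
      · rw [hEq] at h
        exact h.mono hvu'
    have hΔopen : τ.IsOpen Δ := by
      refine TopologicalSpace.GenerateOpen.basic _ ⟨1, one_mem G, ?_⟩
      simp
    have hbot : τ ≠ ⊥ := by
      intro h
      obtain ⟨x⟩ : Nonempty Ω := inferInstance
      have hop : τ.IsOpen ({x} : Set Ω) := by
        rw [h]; exact trivial
      exact key {x} hop ⟨x, rfl⟩ (Set.finite_singleton x)
    exact ⟨τ, hinv, hbot, Δ, hΔopen, hΔinf.nonempty, hΔcinf⟩
end

section
/- Let G be a primitive group of permutations of a countably infinite set Ω. Then G preserves a filter on Ω that does not contain the empty set and contains a set with infinite complement, if and only if there exists a moiety Δ of Ω such that for all g₁, …, gₙ ∈ G the set Δg₁ ∩ ⋯ ∩ Δgₙ is infinite. -/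
/-- A filter on `Ω` is invariant under a group `G` of permutations of `Ω`
if `gS ∈ F` for every `g ∈ G` and `S ∈ F`. -/
def FilterInvariant {Ω : Type*} (G : Subgroup (Equiv.Perm Ω)) (F : Filter Ω) : Prop :=
  ∀ g ∈ G, ∀ S ∈ F, g '' S ∈ F

theorem invariant_filter_iff_moiety {Ω : Type*} [Countable Ω] [Infinite Ω]
    (G : Subgroup (Equiv.Perm Ω)) (hG : SubgroupPrimitive G) :
    (∃ F : Filter Ω, FilterInvariant G F ∧ ∅ ∉ F ∧ ∃ S ∈ F, Sᶜ.Infinite) ↔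
      (∃ Δ : Set Ω, IsMoiety Δ ∧
        ∀ (n : ℕ) (g : Fin n → G), (⋂ i, (g i : Equiv.Perm Ω) '' Δ).Infinite) := by
  obtain ⟨htrans, -⟩ := hG
  constructor
  · rintro ⟨F, hInv, hne, S, hSF, hSc⟩
    have key : ∀ k : ℕ, ∀ T ∈ F, T.Finite → T.ncard ≤ k → False := by
      intro k
      induction k using Nat.strong_induction_on with
      | _ k ih =>
        intro T hTF hTfin hTk
        have hTne : T.Nonempty := by
          rcases T.eq_empty_or_nonempty with h | h
          · exact absurd (h ▸ hTF) hne
          · exact h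
        obtain ⟨x, hx⟩ := hTne
        obtain ⟨y, hy⟩ := hTfin.infinite_compl.nonempty
        obtain ⟨g, hgG, hgxy⟩ := htrans x y
        have hgT : g '' T ∈ F := hInv g hgG T hTF
        have hsub : T ∩ g '' T ⊂ T := by
          refine ⟨Set.inter_subset_left, fun hsub => ?_⟩
          have h1 : T ⊆ g '' T := fun z hz => (hsub hz).2
          have h2 : (g '' T).ncard = T.ncard := Set.ncard_image_of_injective T g.injective
          have h3 : T = g '' T :=
            Set.eq_of_subset_of_ncard_le h1 (le_of_eq h2) (hTfin.image g)
          have hyT : y ∈ g '' T := ⟨x, hx, hgxy⟩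
          rw [← h3] at hyT
          exact hy hyT
        have hlt : (T ∩ g '' T).ncard < T.ncard := Set.ncard_lt_ncard hsub hTfin
        exact ih (T ∩ g '' T).ncard (lt_of_lt_of_le hlt hTk) _
          (Filter.inter_mem hTF hgT) (hTfin.inter_of_left _) le_rfl
    have hmem_inf : ∀ T ∈ F, T.Infinite := by
      intro T hTF
      by_contra h
      exact key T.ncard T hTF (Set.not_infinite.mp h) le_rfl
    refine ⟨S, ⟨hmem_inf S hSF, hSc⟩, fun n g => hmem_inf _ ?_⟩
    exact Filter.iInter_mem.mpr fun i => hInv _ (g i).2 S hSF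
  · rintro ⟨Δ, ⟨hΔinf, hΔc⟩, hΔ⟩
    set B : Set (Set Ω) := Set.range (fun g : G => (g : Equiv.Perm Ω) '' Δ) with hB
    have hcover : ∀ t : Set (Set Ω), t.Finite → t ⊆ B →
        ∃ (n : ℕ) (g : Fin n → G), (⋂ i, (g i : Equiv.Perm Ω) '' Δ) ⊆ ⋂₀ t := by
      intro t ht
      refine Set.Finite.induction_on
        (motive := fun t _ => t ⊆ B → ∃ (n : ℕ) (g : Fin n → G),
          (⋂ i, (g i : Equiv.Perm Ω) '' Δ) ⊆ ⋂₀ t) t ht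
        (fun _ => ⟨0, Fin.elim0, by simp⟩) ?_
      intro a s ha hs ih hsub
      obtain ⟨n, g, hg⟩ := ih (fun x hx => hsub (Set.mem_insert_of_mem _ hx))
      obtain ⟨k, hk⟩ := hsub (Set.mem_insert _ _)
      refine ⟨n + 1, Fin.cons k g, ?_⟩
      rw [Set.sInter_insert]
      intro x hx
      simp only [Set.mem_iInter] at hx
      constructor
      · have h0 := hx 0
        rw [Fin.cons_zero] at h0
        rw [← hk]
        exact h0
      · refine hg (Set.mem_iInter.mpr fun i => ?_)
        have hi := hx i.succ
        rwa [Fin.cons_succ] at hi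
    have hΔB : Δ ∈ B := ⟨1, by simp⟩
    refine ⟨Filter.generate B, ?_, ?_, Δ, Filter.mem_generate_of_mem hΔB, hΔc⟩
    · intro g hgG U hU
      rw [Filter.mem_generate_iff] at hU ⊢
      obtain ⟨t, htB, htfin, hsub⟩ := hU
      refine ⟨(fun s => g '' s) '' t, ?_, htfin.image _, ?_⟩
      · rintro _ ⟨s, hs, rfl⟩
        obtain ⟨k, hk⟩ := htB hs
        refine ⟨⟨g, hgG⟩ * k, ?_⟩
        have hk' : (k : Equiv.Perm Ω) '' Δ = s := hk
        show ((⟨g, hgG⟩ * k : G) : Equiv.Perm Ω) '' Δ = g '' s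
        rw [← hk', ← Set.image_comp]
        rfl
      · intro y hy
        refine ⟨g⁻¹ y, hsub fun a ha => ?_, by simp⟩
        have hya : y ∈ g '' a := hy _ ⟨a, ha, rfl⟩
        obtain ⟨z, hz, hzy⟩ := hya
        have : z = g⁻¹ y := by rw [← hzy]; simp
        rwa [← this]
    · intro h
      rw [Filter.mem_generate_iff] at h
      obtain ⟨t, htB, htfin, hsub⟩ := h
      obtain ⟨n, g, hg⟩ := hcover t htfin htB
      obtain ⟨x, hx⟩ := (hΔ n g).nonempty
      exact hsub (hg hx)
end

section
/- There exists a homeomorphism h of ℚ (with its usual topology) such that the cyclic group generated by h acts transitively on ℚ; that is, for all x, y ∈ ℚ there is an integer n with hⁿ(x) = y. -/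
noncomputable section TransHomeo

open Real Set

namespace TransHomeo

/-- the irrational rotation angle -/
local notation "θ" => Real.sqrt 2
/-- the basepoint shift -/
noncomputable def alpha : ℝ := Real.sqrt 2 / 2

lemma alpha_ne (m n : ℤ) : alpha ≠ (m : ℝ) + n * θ := by
  intro h
  have h2 : ((1 - 2 * n : ℤ) : ℝ) * θ = ((2 * m : ℤ) : ℝ) := by
    have : (0:ℝ) < Real.sqrt 2 := Real.sqrt_pos.2 (by norm_num)
    push_cast
    unfold alpha at h
    nlinarith [h]
  have hne : (1 - 2 * n : ℤ) ≠ 0 := by omega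
  exact (irrational_sqrt_two.intCast_mul hne).ne_int _ h2

lemma sqrt2_int_mul (k : ℤ) (d : ℤ) (hk : k ≠ 0) : (k : ℝ) * θ ≠ (d : ℝ) :=
  (irrational_sqrt_two.intCast_mul hk).ne_int d

/-- The map `n ↦ fract (n√2 - α)`. -/
noncomputable def gmap (n : ℤ) : ℝ := Int.fract ((n : ℝ) * θ - alpha)

lemma gmap_key (n j k : ℤ) : gmap n + (j : ℝ) * θ ≠ (k : ℝ) := by
  intro h
  unfold gmap Int.fract at h
  set m := ⌊(n : ℝ) * θ - alpha⌋ with hm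
  apply alpha_ne (-(m + k)) (n + j)
  push_cast
  linarith [h]

lemma gmap_pos (n : ℤ) : 0 < gmap n := by
  rcases lt_or_eq_of_le (Int.fract_nonneg ((n : ℝ) * θ - alpha)) with h | h
  · exact h
  · exfalso
    apply gmap_key n 0 0
    push_cast
    simp [gmap, ← h]

lemma gmap_lt_one (n : ℤ) : gmap n < 1 := Int.fract_lt_one _

lemma gmap_inj : Function.Injective gmap := by
  intro a b h
  by_contra hab
  unfold gmap Int.fract at h
  have h2 : ((a - b : ℤ) : ℝ) * θ =
      ((⌊(a : ℝ) * θ - alpha⌋ - ⌊(b : ℝ) * θ - alpha⌋ : ℤ) : ℝ) := by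
    push_cast
    linarith [h]
  exact sqrt2_int_mul _ _ (sub_ne_zero.2 hab) h2

/-- The subgroup `ℤ + ℤ√2` of `ℝ`. -/
noncomputable def Dgrp : AddSubgroup ℝ where
  carrier := {x | ∃ m n : ℤ, x = (m : ℝ) + n * θ}
  zero_mem' := ⟨0, 0, by simp⟩
  add_mem' := by
    rintro x y ⟨m1, n1, rfl⟩ ⟨m2, n2, rfl⟩
    exact ⟨m1 + m2, n1 + n2, by push_cast; ring⟩
  neg_mem' := by
    rintro x ⟨m, n, rfl⟩
    exact ⟨-m, -n, by push_cast; ring⟩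

lemma Dgrp_dense : Dense (Dgrp : Set ℝ) := by
  rcases Dgrp.dense_or_cyclic with h | ⟨a, ha⟩
  · exact h
  · exfalso
    have h1 : (1 : ℝ) ∈ Dgrp := ⟨1, 0, by simp⟩
    have h2 : θ ∈ Dgrp := ⟨0, 1, by simp⟩
    rw [ha, AddSubgroup.mem_closure_singleton] at h1 h2
    obtain ⟨p, hp⟩ := h1
    obtain ⟨q, hq⟩ := h2
    have hp0 : p ≠ 0 := by
      rintro rfl
      simp at hp
    have key : (p : ℝ) * θ = (q : ℝ) := by
      have h3 : (p : ℤ) • ((q : ℤ) • a) = (q : ℤ) • ((p : ℤ) • a) := by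
        rw [smul_smul, smul_smul, mul_comm]
      rw [hp, hq] at h3
      rw [zsmul_eq_mul, zsmul_eq_mul] at h3
      rw [h3]; simp
    exact sqrt2_int_mul p q hp0 key

/-- density of the range of `gmap` in `(0,1)` -/
lemma gmap_dense (x : ℝ) (hx0 : 0 < x) (hx1 : x < 1) (ε : ℝ) (hε : 0 < ε) :
    ∃ n : ℤ, |gmap n - x| < ε := by
  set ε' := min ε (min x (1 - x)) with hε'
  have hε'0 : 0 < ε' := by
    apply lt_min hε
    exact lt_min hx0 (by linarith)
  have hmem : (x + alpha) ∈ closure (Dgrp : Set ℝ) := Dgrp_dense _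
  rw [Metric.mem_closure_iff] at hmem
  obtain ⟨b, ⟨m, n, rfl⟩, hb⟩ := hmem ε' hε'0
  rw [Real.dist_eq] at hb
  set δ := ((m : ℝ) + n * θ) - (x + alpha) with hδ
  have habs : |δ| < ε' := by
    rw [abs_sub_comm] at hb
    exact hb
  have hδ1 : -ε' < δ := neg_lt_of_abs_lt habs
  have hδ2 : δ < ε' := lt_of_abs_lt habs
  have hεx : ε' ≤ x := le_trans (min_le_right _ _) (min_le_left _ _)
  have hεx1 : ε' ≤ 1 - x := le_trans (min_le_right _ _) (min_le_right _ _)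
  have hεε : ε' ≤ ε := min_le_left _ _
  refine ⟨n, ?_⟩
  have key : (n : ℝ) * θ - alpha = (x + δ) - m := by
    rw [hδ]; ring
  have : gmap n = x + δ := by
    rw [gmap, key]
    rw [Int.fract_sub_intCast]
    rw [Int.fract_eq_self.2 ⟨by linarith, by linarith⟩]
  rw [this]
  have : |x + δ - x| = |δ| := by ring_nf
  calc |x + δ - x| = |δ| := by ring_nf
    _ < ε' := habs
    _ ≤ ε := hεε

/-- an auxiliary step: find a point of the range strictly between real bounds,
provided the upper bound is a value `gmap a` and the lower bound is any real `x < gmap a`. -/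
lemma exists_between_left {x : ℝ} {a : ℤ} (h : x < gmap a) :
    ∃ b : ℤ, x < gmap b ∧ gmap b < gmap a := by
  set lo := max x 0 with hlo
  have hlo1 : lo < gmap a := max_lt h (gmap_pos a)
  set c := (lo + gmap a) / 2 with hc
  set ε := (gmap a - lo) / 2 with he
  have hε : 0 < ε := by rw [he]; linarith
  have hc0 : 0 < c := by
    have : 0 ≤ lo := le_max_right _ _
    rw [hc]; nlinarith [gmap_pos a]
  have hc1 : c < 1 := by
    have : gmap a < 1 := gmap_lt_one a
    have : 0 ≤ lo := le_max_right _ _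
    rw [hc]; linarith [gmap_lt_one a]
  obtain ⟨b, hb⟩ := gmap_dense c hc0 hc1 ε hε
  have h1 : c - ε < gmap b := by linarith [neg_lt_of_abs_lt hb]
  have h2 : gmap b < c + ε := by linarith [lt_of_abs_lt hb]
  refine ⟨b, ?_, ?_⟩
  · have : c - ε = lo := by rw [hc, he]; ring
    have hx : x ≤ lo := le_max_left _ _
    linarith
  · have : c + ε = gmap a := by rw [hc, he]; ring
    linarith

lemma exists_between_right {x : ℝ} {a : ℤ} (h : gmap a < x) :
    ∃ b : ℤ, gmap a < gmap b ∧ gmap b < x := by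
  set hi := min x 1 with hhi
  have hhi1 : gmap a < hi := lt_min h (gmap_lt_one a)
  set c := (gmap a + hi) / 2 with hc
  set ε := (hi - gmap a) / 2 with he
  have hε : 0 < ε := by rw [he]; linarith
  have hc0 : 0 < c := by
    rw [hc]; nlinarith [gmap_pos a]
  have hc1 : c < 1 := by
    have : hi ≤ 1 := min_le_right _ _
    rw [hc]; nlinarith [gmap_pos a, gmap_lt_one a]
  obtain ⟨b, hb⟩ := gmap_dense c hc0 hc1 ε hε
  have h1 : c - ε < gmap b := by linarith [neg_lt_of_abs_lt hb]
  have h2 : gmap b < c + ε := by linarith [lt_of_abs_lt hb]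
  refine ⟨b, ?_, ?_⟩
  · have : c - ε = gmap a := by rw [hc, he]; ring
    linarith
  · have : c + ε = hi := by rw [hc, he]; ring
    have hx : hi ≤ x := min_le_left _ _
    linarith

/-- A type synonym for `ℤ`, to carry the pulled-back order and topology. -/
def Zp : Type := ℤ

def toZp : ℤ → Zp := id
def ofZp : Zp → ℤ := id

@[simp] lemma toZp_ofZp (n : Zp) : toZp (ofZp n) = n := rfl
@[simp] lemma ofZp_toZp (n : ℤ) : ofZp (toZp n) = n := rfl

/-- The embedding of `Zp` into `ℝ`. -/
noncomputable def gz : Zp → ℝ := fun n => gmap (ofZp n)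

lemma gz_inj : Function.Injective gz := fun a b h =>
  congrArg toZp (gmap_inj h)

noncomputable instance : LinearOrder Zp := LinearOrder.lift' gz gz_inj

lemma gz_le_iff {a b : Zp} : a ≤ b ↔ gz a ≤ gz b := Iff.rfl

lemma gz_lt_iff {a b : Zp} : a < b ↔ gz a < gz b := by
  rw [lt_iff_le_not_ge, lt_iff_le_not_ge, gz_le_iff, gz_le_iff]

instance : Countable Zp := (inferInstance : Countable ℤ)

instance : Nonempty Zp := ⟨toZp 0⟩

instance : DenselyOrdered Zp := by
  constructor
  intro a b hab
  rw [gz_lt_iff] at hab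
  obtain ⟨c, hc1, hc2⟩ := exists_between_left (x := gz a) (a := ofZp b) hab
  exact ⟨toZp c, gz_lt_iff.2 hc1, gz_lt_iff.2 hc2⟩

instance : NoMaxOrder Zp := by
  constructor
  intro a
  have h : gz a < (1 + gz a) / 2 := by
    have := gmap_lt_one (ofZp a)
    unfold gz
    linarith
  obtain ⟨c, hc1, hc2⟩ := exists_between_right (x := (1 + gz a) / 2) (a := ofZp a) h
  exact ⟨toZp c, gz_lt_iff.2 hc1⟩

instance : NoMinOrder Zp := by
  constructor
  intro a
  have h : gz a / 2 < gz a := by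
    have := gmap_pos (ofZp a)
    unfold gz
    linarith
  obtain ⟨c, hc1, hc2⟩ := exists_between_left (x := gz a / 2) (a := ofZp a) h
  exact ⟨toZp c, gz_lt_iff.2 hc2⟩

noncomputable instance : TopologicalSpace Zp := TopologicalSpace.induced gz inferInstance

instance : OrderTopology Zp := by
  refine induced_orderTopology' gz (fun {x y} => gz_lt_iff.symm) ?_ ?_
  · intro a x hx
    obtain ⟨b, hb1, hb2⟩ := exists_between_left (x := x) (a := ofZp a) hx
    exact ⟨toZp b, gz_lt_iff.2 hb2, le_of_lt hb1⟩
  · intro a x hx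
    obtain ⟨b, hb1, hb2⟩ := exists_between_right (x := x) (a := ofZp a) hx
    exact ⟨toZp b, gz_lt_iff.2 hb1, le_of_lt hb2⟩

/-- The shift `n ↦ n + 1` as an equivalence of `Zp`. -/
def shiftE : Zp ≃ Zp where
  toFun n := toZp (ofZp n + 1)
  invFun n := toZp (ofZp n - 1)
  left_inv n := by show ofZp n + 1 - 1 = ofZp n; simp
  right_inv n := by show ofZp n - 1 + 1 = ofZp n; simp

lemma gz_shiftE (n : Zp) : gz (shiftE n) = Int.fract (gz n + θ) := by
  have h0 : gz n = ((ofZp n : ℝ) * θ - alpha) - (⌊(ofZp n : ℝ) * θ - alpha⌋ : ℤ) := by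
    rw [Int.self_sub_floor]; rfl
  have h1 : gz n + θ = (((ofZp n : ℝ) * θ - alpha + θ)) - (⌊(ofZp n : ℝ) * θ - alpha⌋ : ℤ) := by
    rw [h0]; ring
  rw [h1, Int.fract_sub_intCast]
  show Int.fract (((ofZp n + 1 : ℤ) : ℝ) * θ - alpha) = _
  congr 1
  push_cast
  ring

lemma gz_shiftE_symm (n : Zp) : gz (shiftE.symm n) = Int.fract (gz n - θ) := by
  have h0 : gz n = ((ofZp n : ℝ) * θ - alpha) - (⌊(ofZp n : ℝ) * θ - alpha⌋ : ℤ) := by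
    rw [Int.self_sub_floor]; rfl
  have h1 : gz n - θ = (((ofZp n : ℝ) * θ - alpha - θ)) - (⌊(ofZp n : ℝ) * θ - alpha⌋ : ℤ) := by
    rw [h0]; ring
  rw [h1, Int.fract_sub_intCast]
  show Int.fract (((ofZp n - 1 : ℤ) : ℝ) * θ - alpha) = _
  congr 1
  push_cast
  ring

lemma gz_add_sqrt_not_floor (n : Zp) : gz n + θ ≠ (⌊gz n + θ⌋ : ℝ) := by
  intro h
  apply gmap_key (ofZp n) 1 ⌊gz n + θ⌋
  have h' : gmap (ofZp n) + θ = (⌊gz n + θ⌋ : ℝ) := h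
  push_cast
  linarith [h']

lemma gz_sub_sqrt_not_floor (n : Zp) : gz n - θ ≠ (⌊gz n - θ⌋ : ℝ) := by
  intro h
  apply gmap_key (ofZp n) (-1) ⌊gz n - θ⌋
  have h' : gmap (ofZp n) - θ = (⌊gz n - θ⌋ : ℝ) := h
  push_cast
  linarith [h']

lemma continuous_gz : Continuous gz := continuous_induced_dom

lemma continuous_shiftE : Continuous (shiftE : Zp → Zp) := by
  rw [continuous_induced_rng]
  have heq : gz ∘ ⇑shiftE = (fun t : ℝ => Int.fract (t + θ)) ∘ gz := funext gz_shiftE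
  rw [heq]
  rw [continuous_iff_continuousAt]
  intro n
  refine ContinuousAt.comp ?_ continuous_gz.continuousAt
  have h2 := ContinuousAt.comp (g := Int.fract) (f := fun t : ℝ => t + θ) (x := gz n)
    (continuousAt_fract (gz_add_sqrt_not_floor n))
    ((continuous_id.add continuous_const).continuousAt)
  exact h2

lemma continuous_shiftE_symm : Continuous (shiftE.symm : Zp → Zp) := by
  rw [continuous_induced_rng]
  have heq : gz ∘ ⇑shiftE.symm = (fun t : ℝ => Int.fract (t - θ)) ∘ gz := funext gz_shiftE_symm
  rw [heq]
  rw [continuous_iff_continuousAt]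
  intro n
  refine ContinuousAt.comp ?_ continuous_gz.continuousAt
  have h2 := ContinuousAt.comp (g := Int.fract) (f := fun t : ℝ => t - θ) (x := gz n)
    (continuousAt_fract (gz_sub_sqrt_not_floor n))
    ((continuous_id.sub continuous_const).continuousAt)
  exact h2

/-- The shift as a homeomorphism of `Zp`. -/
noncomputable def shiftH : Zp ≃ₜ Zp where
  toEquiv := shiftE
  continuous_toFun := continuous_shiftE
  continuous_invFun := continuous_shiftE_symm

/-- The order isomorphism `Zp ≃o ℚ` from Cantor's theorem. -/
noncomputable def eIso : Zp ≃o ℚ := Classical.choice (Order.iso_of_countable_dense Zp ℚ)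

/-- The homeomorphism `Zp ≃ₜ ℚ`. -/
noncomputable def eH : Zp ≃ₜ ℚ := eIso.toHomeomorph

/-- The transitive homeomorphism of `ℚ`. -/
noncomputable def bigH : ℚ ≃ₜ ℚ := (eH.symm.trans shiftH).trans eH

lemma bigH_apply (x : ℚ) : bigH x = eH (toZp (ofZp (eH.symm x) + 1)) := rfl

lemma bigH_symm_apply (x : ℚ) : bigH.symm x = eH (toZp (ofZp (eH.symm x) - 1)) := rfl

lemma bigH_zpow (n : ℤ) : ∀ x : ℚ,
    ((bigH.toEquiv : Equiv.Perm ℚ) ^ n) x = eH (toZp (ofZp (eH.symm x) + n)) := by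
  induction n using Int.induction_on with
  | zero => intro x; simp
  | succ k ih =>
    intro x
    have : (bigH.toEquiv : Equiv.Perm ℚ) ^ ((k : ℤ) + 1)
        = (bigH.toEquiv : Equiv.Perm ℚ) ^ (k : ℤ) * bigH.toEquiv := zpow_add_one _ _
    rw [this, Equiv.Perm.mul_apply, ih]
    have hb : bigH.toEquiv x = bigH x := rfl
    rw [hb, bigH_apply]
    have hsymm : eH.symm (eH (toZp (ofZp (eH.symm x) + 1))) = toZp (ofZp (eH.symm x) + 1) :=
      eH.symm_apply_apply _
    rw [hsymm]
    exact congrArg (fun m : ℤ => eH (toZp m)) (by simp only [ofZp_toZp]; push_cast; ring)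
  | pred k ih =>
    intro x
    have : (bigH.toEquiv : Equiv.Perm ℚ) ^ (-(k : ℤ) - 1)
        = (bigH.toEquiv : Equiv.Perm ℚ) ^ (-(k : ℤ)) * (bigH.toEquiv)⁻¹ := zpow_sub_one _ _
    rw [this, Equiv.Perm.mul_apply, ih]
    have hb : ((bigH.toEquiv)⁻¹ : Equiv.Perm ℚ) x = bigH.symm x := rfl
    rw [hb, bigH_symm_apply]
    have hsymm : eH.symm (eH (toZp (ofZp (eH.symm x) - 1))) = toZp (ofZp (eH.symm x) - 1) :=
      eH.symm_apply_apply _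
    rw [hsymm]
    exact congrArg (fun m : ℤ => eH (toZp m)) (by simp only [ofZp_toZp]; push_cast; ring)

end TransHomeo

end TransHomeo

/-- There is a homeomorphism of `ℚ` generating a transitive cyclic group:
some integer power of it (as a permutation of `ℚ`) maps any given rational to any other. -/
theorem exists_transitive_homeomorph_of_rat :
    ∃ h : ℚ ≃ₜ ℚ, ∀ x y : ℚ, ∃ n : ℤ, ((h.toEquiv : Equiv.Perm ℚ) ^ n) x = y := by
  refine ⟨TransHomeo.bigH, fun x y => ?_⟩
  refine ⟨TransHomeo.ofZp (TransHomeo.eH.symm y) - TransHomeo.ofZp (TransHomeo.eH.symm x), ?_⟩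
  rw [TransHomeo.bigH_zpow]
  have : TransHomeo.ofZp (TransHomeo.eH.symm x) +
      (TransHomeo.ofZp (TransHomeo.eH.symm y) - TransHomeo.ofZp (TransHomeo.eH.symm x))
      = TransHomeo.ofZp (TransHomeo.eH.symm y) := by ring
  rw [this, TransHomeo.toZp_ofZp, TransHomeo.eH.apply_symm_apply]
end

section
/- Let Γ be a simple graph on a countably infinite vertex set V. The following are equivalent: (a) the neighbourhood filter F_Γ does not contain the empty set; (b) Γ has a spanning subgraph R (a graph on the same vertex set V with every edge of R an edge of Γ) satisfying the extension property; (c) there exists a graph R on the vertex set V satisfying the extension property such that every set belonging to F_Γ belongs to F_R. -/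
/-- The neighbourhood filter of a graph: the filter generated by the open
neighbourhoods of the vertices. -/
def nbhdFilter {V : Type*} (Γ : SimpleGraph V) : Filter V :=
  Filter.generate {s : Set V | ∃ v : V, s = Γ.neighborSet v}

/-- A graph on a countably infinite vertex set has the extension property
(characterising the Rado graph) if for all disjoint finite sets `U`, `W` of vertices
there is a vertex outside `U ∪ W` adjacent to everything in `U` and nothing in `W`. -/
def ExtensionProperty {V : Type*} (R : SimpleGraph V) : Prop :=
  ∀ U W : Finset V, Disjoint U W →
    ∃ z : V, z ∉ U ∧ z ∉ W ∧ (∀ u ∈ U, R.Adj z u) ∧ (∀ w ∈ W, ¬ R.Adj z w)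

section Aux

variable {V : Type*}

lemma empty_not_mem_nbhdFilter_iff [Nonempty V] (Γ : SimpleGraph V) :
    (∅ : Set V) ∉ nbhdFilter Γ ↔
      ∀ T : Finset V, (⋂ v ∈ T, Γ.neighborSet v).Nonempty := by
  classical
  constructor
  · intro h T
    rcases Set.eq_empty_or_nonempty (⋂ v ∈ T, Γ.neighborSet v) with he | hne
    · exfalso
      apply h
      refine Filter.mem_generate_iff.mpr
        ⟨(fun v => Γ.neighborSet v) '' ↑T, ?_, T.finite_toSet.image _, ?_⟩
      · rintro s ⟨v, _, rfl⟩; exact ⟨v, rfl⟩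
      · rw [Set.sInter_image]
        intro x hx
        rw [← he]
        exact Set.mem_iInter₂.mpr fun v hv => Set.mem_iInter₂.mp hx v hv
    · exact hne
  · intro h hmem
    obtain ⟨t, hts, htf, hint⟩ := Filter.mem_generate_iff.mp hmem
    set g : Set V → V := fun s =>
      if hs : ∃ v, s = Γ.neighborSet v then hs.choose else Classical.arbitrary V with hg
    obtain ⟨x, hx⟩ := h (htf.toFinset.image g)
    suffices hxt : x ∈ ⋂₀ t by exact hint hxt
    refine Set.mem_sInter.mpr fun s hs => ?_
    have hsx : ∃ v, s = Γ.neighborSet v := hts hs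
    have hmemT : g s ∈ htf.toFinset.image g :=
      Finset.mem_image_of_mem g (htf.mem_toFinset.mpr hs)
    have hxg : x ∈ Γ.neighborSet (g s) := by
      have := Set.mem_iInter₂.mp hx (g s) hmemT
      exact this
    have hseq : s = Γ.neighborSet (g s) := by
      rw [hg]; simp only [dif_pos hsx]; exact hsx.choose_spec
    rw [hseq]; exact hxg

lemma iInter_nbhd_infinite [Infinite V] (Γ : SimpleGraph V)
    (h : ∀ T : Finset V, (⋂ v ∈ T, Γ.neighborSet v).Nonempty) (T : Finset V) :
    (⋂ v ∈ T, Γ.neighborSet v).Infinite := by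
  classical
  intro hfin
  obtain ⟨z, hz⟩ := h (T ∪ hfin.toFinset)
  have hz' := Set.mem_iInter₂.mp hz
  have hzS : z ∈ ⋂ v ∈ T, Γ.neighborSet v :=
    Set.mem_iInter₂.mpr fun v hv => hz' v (Finset.mem_union_left _ hv)
  have hzF : z ∈ hfin.toFinset := hfin.mem_toFinset.mpr hzS
  have : z ∈ Γ.neighborSet z := hz' z (Finset.mem_union_right _ hzF)
  exact Γ.irrefl this

lemma exists_avoid [Infinite V] (Γ : SimpleGraph V)
    (h : ∀ T : Finset V, (⋂ v ∈ T, Γ.neighborSet v).Nonempty)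
    (T B : Finset V) : ∃ z, z ∉ B ∧ ∀ v ∈ T, Γ.Adj v z := by
  obtain ⟨z, hz⟩ := ((iInter_nbhd_infinite Γ h T).diff B.finite_toSet).nonempty
  refine ⟨z, fun hb => hz.2 hb, fun v hv => ?_⟩
  exact Set.mem_iInter₂.mp hz.1 v hv

lemma extension_nonempty (R : SimpleGraph V) (h : ExtensionProperty R)
    (T : Finset V) : (⋂ v ∈ T, R.neighborSet v).Nonempty := by
  obtain ⟨z, -, -, hadj, -⟩ := h T ∅ (Finset.disjoint_empty_right T)
  exact ⟨z, Set.mem_iInter₂.mpr fun v hv => (hadj v hv).symm⟩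

lemma exists_spanning [Countable V] [Infinite V] (Γ : SimpleGraph V)
    (h : ∀ T B : Finset V, ∃ z, z ∉ B ∧ ∀ v ∈ T, Γ.Adj v z) :
    ∃ R : SimpleGraph V, R ≤ Γ ∧ ExtensionProperty R := by
  classical
  choose pick hpick1 hpick2 using h
  obtain ⟨f, hf⟩ := exists_surjective_nat (Finset V × Finset V)
  -- `used n` : vertices used before stage `n`
  set used : ℕ → Finset V := fun n =>
    Nat.rec ∅ (fun m s => s ∪ (f m).1 ∪ (f m).2 ∪ {pick (f m).1 (s ∪ (f m).1 ∪ (f m).2)}) n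
    with hused
  set z : ℕ → V := fun n => pick (f n).1 (used n ∪ (f n).1 ∪ (f n).2) with hz
  have husucc : ∀ n, used (n + 1) = used n ∪ (f n).1 ∪ (f n).2 ∪ {z n} := fun n => rfl
  have hstep : ∀ n, used n ≤ used (n + 1) := by
    intro n
    rw [husucc]
    exact (Finset.subset_union_left.trans Finset.subset_union_left).trans
      Finset.subset_union_left
  have hmono : ∀ m n, m ≤ n → used m ⊆ used n := fun m n hmn =>
    monotone_nat_of_le_succ hstep hmn
  have hzfresh : ∀ n, z n ∉ used n ∪ (f n).1 ∪ (f n).2 := fun n => hpick1 _ _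
  have hzadj : ∀ n, ∀ v ∈ (f n).1, Γ.Adj v (z n) := fun n => hpick2 _ _
  have hU1 : ∀ n, (f n).1 ⊆ used (n + 1) := by
    intro n
    rw [husucc]
    exact (Finset.subset_union_right.trans Finset.subset_union_left).trans
      Finset.subset_union_left
  have hU2 : ∀ n, (f n).2 ⊆ used (n + 1) := by
    intro n; rw [husucc]
    exact Finset.subset_union_right.trans Finset.subset_union_left
  have hU3 : ∀ n, z n ∈ used (n + 1) := by
    intro n; rw [husucc]
    exact Finset.mem_union_right _ (Finset.mem_singleton_self _)
  -- key separation facts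
  have hzne : ∀ m n, m < n → z n ≠ z m := by
    intro m n hmn heq
    apply hzfresh n
    refine Finset.mem_union_left _ (Finset.mem_union_left _ ?_)
    exact hmono (m + 1) n hmn (heq ▸ hU3 m)
  have hznU : ∀ m n, m < n → z n ∉ (f m).1 := by
    intro m n hmn hmem
    exact hzfresh n (Finset.mem_union_left _ (Finset.mem_union_left _
      (hmono (m + 1) n hmn (hU1 m hmem))))
  have hznW : ∀ m n, m < n → z n ∉ (f m).2 := by
    intro m n hmn hmem
    exact hzfresh n (Finset.mem_union_left _ (Finset.mem_union_left _
      (hmono (m + 1) n hmn (hU2 m hmem))))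
  refine ⟨SimpleGraph.fromRel (fun a b => ∃ n, a = z n ∧ b ∈ (f n).1), ?_, ?_⟩
  · intro a b hab
    rw [SimpleGraph.fromRel_adj] at hab
    obtain ⟨hne, h1 | h1⟩ := hab
    · obtain ⟨n, rfl, hb⟩ := h1
      exact (hzadj n b hb).symm
    · obtain ⟨n, rfl, ha⟩ := h1
      exact hzadj n a ha
  · intro U W hUW
    obtain ⟨n, hn⟩ := hf (U, W)
    have hnU : (f n).1 = U := by rw [hn]
    have hnW : (f n).2 = W := by rw [hn]
    have hfr := hzfresh n
    rw [hnU, hnW] at hfr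
    refine ⟨z n, fun hm => hfr (Finset.mem_union_left _ (Finset.mem_union_right _ hm)),
      fun hm => hfr (Finset.mem_union_right _ hm), ?_, ?_⟩
    · intro u hu
      rw [SimpleGraph.fromRel_adj]
      refine ⟨fun heq => hfr (Finset.mem_union_left _ (Finset.mem_union_right _ (heq ▸ hu))),
        Or.inl ⟨n, rfl, hnU ▸ hu⟩⟩
    · intro w hw hadj
      rw [SimpleGraph.fromRel_adj] at hadj
      obtain ⟨hne, hr | hr⟩ := hadj
      · obtain ⟨k, hk1, hk2⟩ := hr
        rcases lt_trichotomy n k with hlt | rfl | hlt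
        · exact hzne n k hlt hk1.symm
        · exact (Finset.disjoint_left.mp hUW (hnU ▸ hk2) hw)
        · exact hzne k n hlt hk1
      · obtain ⟨k, hk1, hk2⟩ := hr
        rcases lt_trichotomy n k with hlt | rfl | hlt
        · exact hznW n k hlt (hk1 ▸ hnW ▸ hw)
        · exact hfr (Finset.mem_union_left _ (Finset.mem_union_right _ (hnU ▸ hk2)))
        · exact hznU k n hlt hk2

end Aux

theorem nbhdFilter_nontrivial_iff_rado_spanning {V : Type*} [Countable V] [Infinite V]
    (Γ : SimpleGraph V) :
    ((∅ : Set V) ∉ nbhdFilter Γ ↔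
        ∃ R : SimpleGraph V, R ≤ Γ ∧ ExtensionProperty R) ∧
    ((∅ : Set V) ∉ nbhdFilter Γ ↔
        ∃ R : SimpleGraph V, ExtensionProperty R ∧
          ∀ s : Set V, s ∈ nbhdFilter Γ → s ∈ nbhdFilter R) := by
  have hfwd : (∅ : Set V) ∉ nbhdFilter Γ → ∃ R : SimpleGraph V, R ≤ Γ ∧ ExtensionProperty R := by
    intro h
    exact exists_spanning Γ (exists_avoid Γ ((empty_not_mem_nbhdFilter_iff Γ).mp h))
  have hsub : ∀ R : SimpleGraph V, R ≤ Γ →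
      ∀ s : Set V, s ∈ nbhdFilter Γ → s ∈ nbhdFilter R := by
    intro R hR s hs
    have : nbhdFilter R ≤ nbhdFilter Γ := by
      refine Filter.le_generate_iff.mpr ?_
      rintro t ⟨v, rfl⟩
      refine Filter.mem_of_superset (Filter.mem_generate_of_mem ⟨v, rfl⟩) ?_
      intro x hx
      exact hR hx
    exact this hs
  have hext_ne : ∀ R : SimpleGraph V, ExtensionProperty R → (∅ : Set V) ∉ nbhdFilter R :=
    fun R hR => (empty_not_mem_nbhdFilter_iff R).mpr (extension_nonempty R hR)
  constructor
  · constructor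
    · exact hfwd
    · rintro ⟨R, hRle, hRext⟩
      rw [empty_not_mem_nbhdFilter_iff]
      intro T
      obtain ⟨x, hx⟩ := extension_nonempty R hRext T
      exact ⟨x, Set.mem_iInter₂.mpr fun v hv => hRle (Set.mem_iInter₂.mp hx v hv)⟩
  · constructor
    · intro h
      obtain ⟨R, hRle, hRext⟩ := hfwd h
      exact ⟨R, hRext, hsub R hRle⟩
    · rintro ⟨R, hRext, hRsub⟩ hmem
      exact hext_ne R hRext (hRsub ∅ hmem)
end

section
/- There exist simple graphs R₁ and R₂ on a common countably infinite vertex set V such that every edge of R₁ is an edge of R₂, both R₁ and R₂ satisfy the extension property, and the neighbourhood filter F_{R₂} is properly contained in the neighbourhood filter F_{R₁} (that is, every member of F_{R₂} is a member of F_{R₁}, but F_{R₁} ≠ F_{R₂}). -/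
/-- The bit graph (a model of the Rado graph). -/
def bitGraph : SimpleGraph ℕ where
  Adj m n := m ≠ n ∧ (Nat.testBit m n ∨ Nat.testBit n m)
  symm := by
    constructor; rintro m n ⟨h1, h2⟩
    exact ⟨h1.symm, h2.symm⟩
  loopless := by constructor; rintro m ⟨h1, _⟩; exact h1 rfl

/-- The bit graph with edges `{0, n}` for `Odd (log 2 n)` removed. -/
def bitGraph' : SimpleGraph ℕ where
  Adj m n := bitGraph.Adj m n ∧ ¬(m = 0 ∧ Odd (Nat.log 2 n)) ∧ ¬(n = 0 ∧ Odd (Nat.log 2 m))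
  symm := by constructor; rintro m n ⟨h1, h2, h3⟩; exact ⟨h1.symm, h3, h2⟩
  loopless := by constructor; rintro m ⟨h1, _⟩; exact bitGraph.loopless.irrefl m h1

lemma sum_range_two_pow_lt (n : ℕ) : ∑ i ∈ Finset.range n, 2 ^ i < 2 ^ n := by
  induction n with
  | zero => simp
  | succ n ih => rw [Finset.sum_range_succ, pow_succ]; omega

lemma sum_two_pow_lt {S : Finset ℕ} {M : ℕ} (h : ∀ x ∈ S, x < M) :
    ∑ u ∈ S, 2 ^ u < 2 ^ M := by
  calc ∑ u ∈ S, 2 ^ u ≤ ∑ u ∈ Finset.range M, 2 ^ u := by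
        apply Finset.sum_le_sum_of_subset
        intro x hx
        exact Finset.mem_range.mpr (h x hx)
    _ < 2 ^ M := sum_range_two_pow_lt M

lemma testBit_two_pow_add {a b n : ℕ} (hb : b < 2 ^ a) :
    (2 ^ a + b).testBit n = true ↔ n = a ∨ b.testBit n = true := by
  rcases lt_trichotomy n a with h | h | h
  · rw [Nat.testBit_two_pow_add_gt h]
    simp [h.ne]
  · subst h
    rw [Nat.testBit_two_pow_add_eq, Nat.testBit_lt_two_pow hb]
    simp
  · have h1 : 2 ^ a + b < 2 ^ n := by
      have : 2 ^ (a + 1) ≤ 2 ^ n := Nat.pow_le_pow_right (by norm_num) h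
      rw [pow_succ] at this; omega
    rw [Nat.testBit_lt_two_pow h1, Nat.testBit_lt_two_pow (by omega)]
    simp [h.ne']

lemma testBit_sum_pow (S : Finset ℕ) (n : ℕ) :
    (∑ u ∈ S, 2 ^ u).testBit n = true ↔ n ∈ S := by
  induction S using Finset.induction_on_max generalizing n with
  | empty => simp
  | insert a S ha ih =>
    have haS : a ∉ S := fun h => lt_irrefl a (ha a h)
    rw [Finset.sum_insert haS]
    rw [testBit_two_pow_add (sum_two_pow_lt ha)]
    simp [ih, or_comm]

lemma key (S : Finset ℕ) (M : ℕ) (hM : ∀ x ∈ S, x < M) :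
    ∃ z : ℕ, 2 ^ M ≤ z ∧ Nat.log 2 z = M ∧ ∀ n, (z.testBit n = true ↔ n ∈ insert M S) := by
  refine ⟨∑ u ∈ insert M S, 2 ^ u, ?_, ?_, fun n => testBit_sum_pow _ n⟩
  all_goals {
    have hMS : M ∉ S := fun h => lt_irrefl M (hM M h)
    rw [Finset.sum_insert hMS]
    have h2 := sum_two_pow_lt hM
    first
    | omega
    | exact Nat.log_eq_of_pow_le_of_lt_pow (by omega) (by rw [pow_succ]; omega) }

lemma ext_helper (U W : Finset ℕ) (h : Disjoint U W) (M : ℕ)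
    (hU : ∀ x ∈ U, x < M) (hW : ∀ x ∈ W, x < M) :
    ∃ z : ℕ, Nat.log 2 z = M ∧ z ≠ 0 ∧ z ∉ U ∧ z ∉ W ∧
      (∀ u ∈ U, bitGraph.Adj z u) ∧ (∀ w ∈ W, ¬ bitGraph.Adj z w) := by
  obtain ⟨z, hle, hlog, hbit⟩ := key U M hU
  have hpos := Nat.two_pow_pos M
  have hzne : z ≠ 0 := by omega
  have hbig : ∀ x, x < M → x < z := fun x hx =>
    lt_of_lt_of_le (lt_trans hx (Nat.lt_two_pow_self (n := M))) hle
  refine ⟨z, hlog, hzne, fun hz => lt_irrefl z (hbig z (hU z hz)),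
    fun hz => lt_irrefl z (hbig z (hW z hz)), ?_, ?_⟩
  · intro u hu
    exact ⟨(hbig u (hU u hu)).ne', Or.inl ((hbit u).mpr (Finset.mem_insert_of_mem hu))⟩
  · rintro w hw ⟨hne, hor | hor⟩
    · rcases Finset.mem_insert.mp ((hbit w).mp hor) with h1 | h1
      · exact absurd (hW w hw) (by omega)
      · exact Finset.disjoint_left.mp h h1 hw
    · have hwz : w < 2 ^ z :=
        lt_of_lt_of_le (Nat.lt_two_pow_self (n := w))
          (Nat.pow_le_pow_right (by norm_num) (le_of_lt (hbig w (hW w hw))))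
      rw [Nat.testBit_lt_two_pow hwz] at hor
      exact Bool.false_ne_true hor

lemma bitGraph_ext : ExtensionProperty bitGraph := by
  intro U W h
  set M := (U ∪ W).sup id + 1 with hM
  have hU : ∀ x ∈ U, x < M := fun x hx =>
    Nat.lt_succ_of_le (Finset.le_sup (f := id) (Finset.mem_union_left _ hx))
  have hW : ∀ x ∈ W, x < M := fun x hx =>
    Nat.lt_succ_of_le (Finset.le_sup (f := id) (Finset.mem_union_right _ hx))
  obtain ⟨z, _, _, h1, h2, h3, h4⟩ := ext_helper U W h M hU hW
  exact ⟨z, h1, h2, h3, h4⟩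

lemma bitGraph'_ext : ExtensionProperty bitGraph' := by
  intro U W h
  set M := 2 * ((U ∪ W).sup id + 1) with hM
  have hU : ∀ x ∈ U, x < M := fun x hx => by
    have := Finset.le_sup (f := id) (Finset.mem_union_left W hx); simp at this; omega
  have hW : ∀ x ∈ W, x < M := fun x hx => by
    have := Finset.le_sup (f := id) (Finset.mem_union_right U hx); simp at this; omega
  obtain ⟨z, hlog, hzne, h1, h2, h3, h4⟩ := ext_helper U W h M hU hW
  have hnotodd : ¬ Odd (Nat.log 2 z) := by
    rw [hlog]; simp only [Nat.odd_iff, hM]; omega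
  refine ⟨z, h1, h2, fun u hu => ⟨h3 u hu, fun ⟨h0, _⟩ => hzne h0,
    fun ⟨_, ho⟩ => hnotodd ho⟩, fun w hw hadj => h4 w hw hadj.1⟩

lemma nbhd_incl : ∀ s : Set ℕ, s ∈ nbhdFilter bitGraph → s ∈ nbhdFilter bitGraph' := by
  have hle : nbhdFilter bitGraph' ≤ nbhdFilter bitGraph := by
    rw [nbhdFilter, nbhdFilter, Filter.le_generate_iff]
    rintro s ⟨v, rfl⟩
    refine Filter.mem_of_superset
      (Filter.mem_generate_of_mem (⟨v, rfl⟩ : ∃ w, bitGraph'.neighborSet v = bitGraph'.neighborSet w)) ?_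
    intro x hx
    exact hx.1
  exact fun s hs => hle hs

lemma exists_finset (t : Set (Set ℕ)) (htf : t.Finite)
    (htg : t ⊆ {s | ∃ v, s = bitGraph.neighborSet v}) :
    ∃ S : Finset ℕ, ∀ x ∈ t, ∃ v ∈ S, x = bitGraph.neighborSet v := by
  revert htg
  refine Set.Finite.induction_on t htf ?_ ?_
  · intro _; exact ⟨∅, by simp⟩
  · intro a s _ _ ih hsub
    obtain ⟨S, hS⟩ := ih (fun x hx => hsub (Set.mem_insert_of_mem a hx))
    obtain ⟨v, hv⟩ := hsub (Set.mem_insert a s)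
    refine ⟨insert v S, ?_⟩
    rintro x (rfl | hx)
    · exact ⟨v, Finset.mem_insert_self v S, hv⟩
    · obtain ⟨w, hw1, hw2⟩ := hS x hx
      exact ⟨w, Finset.mem_insert_of_mem hw1, hw2⟩

lemma nbhd_ne : nbhdFilter bitGraph' ≠ nbhdFilter bitGraph := by
  intro heq
  have hmem : bitGraph'.neighborSet 0 ∈ nbhdFilter bitGraph' :=
    Filter.mem_generate_of_mem ⟨0, rfl⟩
  rw [heq, nbhdFilter, Filter.mem_generate_iff] at hmem
  obtain ⟨t, htg, htf, hsub⟩ := hmem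
  obtain ⟨S, hS⟩ := exists_finset t htf htg
  set T := insert 0 S with hT
  set M := 2 * (T.sup id) + 1 with hM
  have hTM : ∀ x ∈ T, x < M := fun x hx => by
    have := Finset.le_sup (f := id) hx; simp at this; omega
  obtain ⟨z, hle, hlog, hbit⟩ := key T M hTM
  have hodd : Odd (Nat.log 2 z) := by rw [hlog]; exact ⟨T.sup id, by omega⟩
  have hbig : ∀ x, x < M → x < z := fun x hx =>
    lt_of_lt_of_le (lt_trans hx (Nat.lt_two_pow_self (n := M))) hle
  have hzt : z ∈ ⋂₀ t := by
    intro x hx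
    obtain ⟨v, hvS, rfl⟩ := hS x hx
    have hvT : v ∈ T := Finset.mem_insert_of_mem hvS
    refine SimpleGraph.mem_neighborSet .. |>.mpr ⟨(hbig v (hTM v hvT)).ne, ?_⟩
    exact Or.inr ((hbit v).mpr (Finset.mem_insert_of_mem hvT))
  have := hsub hzt
  rw [SimpleGraph.mem_neighborSet] at this
  exact this.2.1 ⟨rfl, hodd⟩

/-- There are two copies of the Rado graph, one a spanning subgraph of the other,
whose neighbourhood filters are properly nested. -/
theorem exists_properly_nested_rado_nbhdFilters :
    ∃ (V : Type) (_ : Countable V) (_ : Infinite V) (R₁ R₂ : SimpleGraph V),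
      R₁ ≤ R₂ ∧ ExtensionProperty R₁ ∧ ExtensionProperty R₂ ∧
      (∀ s : Set V, s ∈ nbhdFilter R₂ → s ∈ nbhdFilter R₁) ∧
      nbhdFilter R₁ ≠ nbhdFilter R₂ := by
  exact ⟨ℕ, inferInstance, inferInstance, bitGraph', bitGraph,
    fun a b h => h.1, bitGraph'_ext, bitGraph_ext, nbhd_incl, nbhd_ne⟩
end

section
/- Let R₁ and R₂ be simple graphs on a common vertex set V with every edge of R₁ an edge of R₂, and let D be the graph on V whose edges are exactly the edges of R₂ that are not edges of R₁. Suppose that for every finite set S ⊆ V there is a vertex x adjacent in D to every vertex of S. Then for every vertex v, the open neighbourhood R₁(v) does not belong to the neighbourhood filter F_{R₂}; in particular F_{R₁} ≠ F_{R₂}. -/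
/-- If `R₁` is a spanning subgraph of `R₂` and in the difference graph `D = R₂ \ R₁`
every finite set of vertices has a common neighbour, then no open `R₁`-neighbourhood
belongs to the neighbourhood filter of `R₂`; in particular the two neighbourhood
filters differ. -/
theorem nbhd_not_mem_of_difference_common_neighbours {V : Type*}
    (R₁ R₂ : SimpleGraph V) (hle : R₁ ≤ R₂)
    (hD : ∀ S : Finset V, ∃ x : V, ∀ v ∈ S, (R₂ \ R₁).Adj x v) :
    (∀ v : V, R₁.neighborSet v ∉ nbhdFilter R₂) ∧ nbhdFilter R₁ ≠ nbhdFilter R₂ := by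
  have key : ∀ v : V, R₁.neighborSet v ∉ nbhdFilter R₂ := by
    intro v hv
    rw [nbhdFilter, Filter.mem_generate_iff] at hv
    classical
    obtain ⟨t, htg, htf, hsub⟩ := hv
    choose f hf using fun (s : htf.toFinset) => htg (htf.mem_toFinset.mp s.2)
    obtain ⟨x, hx⟩ := hD (insert v (Finset.univ.image f))
    have hxv : (R₂ \ R₁).Adj x v := hx v (Finset.mem_insert_self _ _)
    have hxmem : x ∈ ⋂₀ t := by
      intro s hs
      have hxs : (R₂ \ R₁).Adj x (f ⟨s, htf.mem_toFinset.mpr hs⟩) := by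
        apply hx
        apply Finset.mem_insert_of_mem
        exact Finset.mem_image.mpr ⟨_, Finset.mem_univ _, rfl⟩
      have := hf ⟨s, htf.mem_toFinset.mpr hs⟩
      simp only at this
      rw [this]
      exact (hxs.1).symm
    have : R₁.Adj v x := hsub hxmem
    exact hxv.2 this.symm
  refine ⟨key, ?_⟩
  intro h
  obtain ⟨x, -⟩ := hD ∅
  have : R₁.neighborSet x ∈ nbhdFilter R₁ :=
    Filter.mem_generate_of_mem ⟨x, rfl⟩
  rw [h] at this
  exact key x this
end

section
/- Let G be a primitive group of permutations of an infinite set Ω, and let τ be a G-invariant topology on Ω that contains a non-empty finite open set. Then τ is the discrete topology. -/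
/-- A topology invariant under a primitive group on an infinite set which has a
non-empty finite open set is discrete. -/
theorem discrete_of_finite_open {Ω : Type*} [Infinite Ω] [τ : TopologicalSpace Ω]
    (G : Subgroup (Equiv.Perm Ω)) (hprim : SubgroupPrimitive G) (hinv : TopInvariant G τ)
    (h : ∃ s : Set Ω, IsOpen s ∧ s.Finite ∧ s.Nonempty) :
    DiscreteTopology Ω := by
  classical
  obtain ⟨htrans, hrel⟩ := hprim
  obtain ⟨s₀, hs₀o, hs₀f, hs₀n⟩ := h
  have hP : ∃ n, ∃ s : Set Ω, IsOpen s ∧ s.Finite ∧ s.Nonempty ∧ s.ncard = n :=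
    ⟨s₀.ncard, s₀, hs₀o, hs₀f, hs₀n, rfl⟩
  set m := Nat.find hP with hm
  obtain ⟨S, hSo, hSf, hSn, hScard⟩ := Nat.find_spec hP
  have hmin : ∀ t : Set Ω, IsOpen t → t.Finite → t.Nonempty → m ≤ t.ncard := by
    intro t ho hf hn
    exact Nat.find_min' hP ⟨t, ho, hf, hn, rfl⟩
  -- two open finite sets of minimal cardinality are equal or disjoint
  have block : ∀ A B : Set Ω, IsOpen A → A.Finite → A.ncard = m →
      IsOpen B → B.Finite → B.ncard = m → (A ∩ B).Nonempty → A = B := by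
    intro A B hAo hAf hAc hBo hBf hBc hne
    have hio : IsOpen (A ∩ B) := hAo.inter hBo
    have hif : (A ∩ B).Finite := hAf.inter_of_left B
    have hle := hmin _ hio hif hne
    have h1 : A ∩ B = A :=
      Set.eq_of_subset_of_ncard_le Set.inter_subset_left (hAc ▸ hle) hAf
    have h2 : A ∩ B = B :=
      Set.eq_of_subset_of_ncard_le Set.inter_subset_right (hBc ▸ hle) hBf
    rw [← h1, h2]
  -- properties of translates
  have trO : ∀ g : Equiv.Perm Ω, g ∈ G → IsOpen ((g : Ω → Ω) '' S) := by
    intro g hg; exact (hinv g hg S).mp hSo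
  have trF : ∀ g : Equiv.Perm Ω, ((g : Ω → Ω) '' S).Finite := fun g => hSf.image _
  have trC : ∀ g : Equiv.Perm Ω, ((g : Ω → Ω) '' S).ncard = m := by
    intro g; rw [Set.ncard_image_of_injective S g.injective]; exact hScard
  -- the relation
  set r : Ω → Ω → Prop := fun x y => ∃ g ∈ G, x ∈ (g : Ω → Ω) '' S ∧ y ∈ (g : Ω → Ω) '' S
    with hr
  obtain ⟨a, ha⟩ := hSn
  have hmem : ∀ x : Ω, ∃ g ∈ G, x ∈ (g : Ω → Ω) '' S := by
    intro x
    obtain ⟨g, hg, hgx⟩ := htrans a x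
    exact ⟨g, hg, ⟨a, ha, hgx⟩⟩
  have hequiv : Equivalence r := by
    constructor
    · intro x
      obtain ⟨g, hg, hx⟩ := hmem x
      exact ⟨g, hg, hx, hx⟩
    · rintro x y ⟨g, hg, hx, hy⟩
      exact ⟨g, hg, hy, hx⟩
    · rintro x y z ⟨g, hg, hx, hy⟩ ⟨k, hk, hy', hz⟩
      have : (g : Ω → Ω) '' S = (k : Ω → Ω) '' S :=
        block _ _ (trO g hg) (trF g) (trC g) (trO k hk) (trF k) (trC k) ⟨y, hy, hy'⟩
      exact ⟨g, hg, hx, this ▸ hz⟩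
  have hinvr : ∀ g ∈ G, ∀ x y : Ω, r x y → r (g x) (g y) := by
    rintro g hg x y ⟨k, hk, hx, hy⟩
    refine ⟨g * k, mul_mem hg hk, ?_, ?_⟩
    · obtain ⟨u, hu, hux⟩ := hx
      exact ⟨u, hu, by simp [hux]⟩
    · obtain ⟨u, hu, huy⟩ := hy
      exact ⟨u, hu, by simp [huy]⟩
  rcases hrel r hequiv hinvr with heq | huniv
  · -- r is equality, so S is a singleton and all singletons are open
    have hSsing : S = {a} := by
      apply Set.eq_singleton_iff_unique_mem.mpr
      refine ⟨ha, fun b hb => ?_⟩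
      have : r b a := ⟨1, one_mem G, by simpa using hb, by simpa using ha⟩
      exact (heq b a).mp this
    rw [discreteTopology_iff_isOpen_singleton]
    intro x
    obtain ⟨g, hg, hga⟩ := htrans a x
    have : (g : Ω → Ω) '' S = {x} := by
      rw [hSsing, Set.image_singleton, hga]
    rw [← this]
    exact trO g hg
  · -- r is universal: Ω would be finite, contradiction
    exfalso
    obtain ⟨g₀, hg₀, ha₀⟩ := hmem a
    have hU : (Set.univ : Set Ω) ⊆ (g₀ : Ω → Ω) '' S := by
      intro y _
      obtain ⟨g, hg, hay, hyy⟩ := huniv a y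
      have : (g : Ω → Ω) '' S = (g₀ : Ω → Ω) '' S :=
        block _ _ (trO g hg) (trF g) (trC g) (trO g₀ hg₀) (trF g₀) (trC g₀) ⟨a, hay, ha₀⟩
      exact this ▸ hyy
    exact Set.infinite_univ ((trF g₀).subset hU)
end

section
/- Let G be a primitive group of permutations of an infinite set Ω, and let τ be a G-invariant topology on Ω. If Ω is the union of finitely many subsets each of which is discrete in the subspace topology induced by τ, then τ is the discrete topology. -/
/-- Auxiliary induction: a space where every singleton complement is open (T1),
no singleton is open, cannot have a nonempty open set covered by finitely many
relatively-discrete sets. -/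
lemma lemA_aux {Ω : Type*} [τ : TopologicalSpace Ω]
    (hT1 : ∀ x : Ω, IsOpen ({x}ᶜ : Set Ω))
    (hni : ∀ x : Ω, ¬ IsOpen ({x} : Set Ω)) :
    ∀ (n : ℕ) (D : Fin n → Set Ω) (V : Set Ω), IsOpen V → V.Nonempty →
      V ⊆ ⋃ i, D i → (∀ i, ∀ x ∈ D i, ∃ U, IsOpen U ∧ U ∩ D i = {x}) → False := by
  intro n
  induction n with
  | zero =>
    intro D V _ hne hsub _
    obtain ⟨x, hx⟩ := hne
    simpa using hsub hx
  | succ n ih =>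
    intro D V hV hne hsub hdisc
    obtain ⟨x, hxV⟩ := hne
    obtain ⟨i, hxD⟩ := Set.mem_iUnion.mp (hsub hxV)
    obtain ⟨U, hU, hUD⟩ := hdisc i x hxD
    have hxU : x ∈ U := by
      have : x ∈ U ∩ D i := by rw [hUD]; rfl
      exact this.1
    set V' := (V ∩ U) ∩ {x}ᶜ with hV'def
    have hV'open : IsOpen V' := (hV.inter hU).inter (hT1 x)
    have hV'ne : V'.Nonempty := by
      by_contra hempty
      rw [Set.not_nonempty_iff_eq_empty] at hempty
      apply hni x
      have hvu : V ∩ U = {x} := by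
        apply Set.eq_singleton_iff_unique_mem.mpr
        refine ⟨⟨hxV, hxU⟩, ?_⟩
        intro z hz
        by_contra hzx
        have : z ∈ V' := ⟨hz, hzx⟩
        rw [hempty] at this
        exact this
      rw [← hvu]
      exact hV.inter hU
    refine ih (D ∘ i.succAbove) V' hV'open hV'ne ?_ ?_
    · intro z hz
      obtain ⟨j, hj⟩ := Set.mem_iUnion.mp (hsub hz.1.1)
      have hji : j ≠ i := by
        rintro rfl
        have : z ∈ U ∩ D j := ⟨hz.1.2, hj⟩
        rw [hUD] at this
        exact hz.2 this
      obtain ⟨k, hk⟩ := Fin.exists_succAbove_eq hji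
      exact Set.mem_iUnion.mpr ⟨k, by simpa [hk] using hj⟩
    · intro k y hy
      exact hdisc (i.succAbove k) y hy

/-- A topology invariant under a primitive group on an infinite set which is a
union of finitely many discrete subsets is discrete. -/
theorem discrete_of_finitely_many_discrete_pieces {Ω : Type*} [Infinite Ω]
    [τ : TopologicalSpace Ω]
    (G : Subgroup (Equiv.Perm Ω)) (hprim : SubgroupPrimitive G) (hinv : TopInvariant G τ)
    (h : ∃ (n : ℕ) (D : Fin n → Set Ω),
      (⋃ i, D i) = Set.univ ∧ ∀ i, DiscreteTopology (D i)) :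
    DiscreteTopology Ω := by
  obtain ⟨n, D, hcover, hDdisc⟩ := h
  -- specialization preorder
  set le : Ω → Ω → Prop := fun x y => ∀ U : Set Ω, IsOpen U → x ∈ U → y ∈ U with hle_def
  -- discreteness of pieces, explicitly
  have hdisc : ∀ i, ∀ x ∈ D i, ∃ U, IsOpen U ∧ U ∩ D i = {x} := by
    intro i x hx
    have h1 : IsOpen ({(⟨x, hx⟩ : D i)} : Set (D i)) := isOpen_discrete _
    rw [isOpen_induced_iff] at h1
    obtain ⟨U, hU, hUeq⟩ := h1
    refine ⟨U, hU, ?_⟩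
    ext z
    constructor
    · rintro ⟨hzU, hzD⟩
      have : (⟨z, hzD⟩ : D i) ∈ Subtype.val ⁻¹' U := hzU
      rw [hUeq] at this
      exact congrArg Subtype.val this
    · intro hz
      have hz' : z = x := hz
      subst hz'
      have : (⟨z, hx⟩ : D i) ∈ Subtype.val ⁻¹' U := by rw [hUeq]; rfl
      exact ⟨this, hx⟩
  -- invariance of le
  have hle_inv : ∀ g ∈ G, ∀ x y : Ω, le x y → le (g x) (g y) := by
    intro g hg x y hxy U hU hgx
    have hW : IsOpen ((g⁻¹ : Equiv.Perm Ω) '' U) := (hinv g⁻¹ (inv_mem hg) U).mp hU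
    have hxW : x ∈ (g⁻¹ : Equiv.Perm Ω) '' U := ⟨g x, hgx, by simp⟩
    obtain ⟨u, huU, huy⟩ := hxy _ hW hxW
    have : g y = u := by rw [← huy]; simp
    rwa [this]
  -- mutual specialization equivalence
  have hr3 := hprim.2 (fun x y => le x y ∧ le y x)
    ⟨fun x => ⟨fun U _ h => h, fun U _ h => h⟩,
     fun h => ⟨h.2, h.1⟩,
     fun h1 h2 => ⟨fun U hU hx => h2.1 U hU (h1.1 U hU hx),
                   fun U hU hx => h1.2 U hU (h2.2 U hU hx)⟩⟩
    (fun g hg x y hxy => ⟨hle_inv g hg x y hxy.1, hle_inv g hg y x hxy.2⟩)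
  rcases hr3 with htriv | huniv
  swap
  · -- universal: indiscrete topology, each D i a subsingleton, Ω finite: contradiction
    exfalso
    have hsub : ∀ i, (D i).Subsingleton := by
      intro i a ha b hb
      obtain ⟨U, hU, hUD⟩ := hdisc i a ha
      have haU : a ∈ U := by
        have : a ∈ U ∩ D i := by rw [hUD]; rfl
        exact this.1
      have hbU : b ∈ U := (huniv a b).1 U hU haU
      have : b ∈ U ∩ D i := ⟨hbU, hb⟩
      rw [hUD] at this
      exact this.symm
    have hfin : (Set.univ : Set Ω).Finite := by
      rw [← hcover]
      exact Set.finite_iUnion (fun i => (hsub i).finite)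
    exact Set.infinite_univ hfin
  have antisym : ∀ x y : Ω, le x y → le y x → x = y :=
    fun x y h1 h2 => (htriv x y).mp ⟨h1, h2⟩
  -- isolated points
  by_cases hiso : ∃ x : Ω, IsOpen ({x} : Set Ω)
  · obtain ⟨x, hx⟩ := hiso
    have hall : ∀ y : Ω, IsOpen ({y} : Set Ω) := by
      intro y
      obtain ⟨g, hg, hgx⟩ := hprim.1 x y
      have := (hinv g hg {x}).mp hx
      rwa [Set.image_singleton, hgx] at this
    exact discreteTopology_iff_isOpen_singleton.mpr hall
  push_neg at hiso
  exfalso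
  -- closed points
  by_cases hcl : ∃ x : Ω, ∀ y : Ω, le y x → y = x
  · -- all points closed: T1, use the induction lemma
    obtain ⟨x₀, hx₀⟩ := hcl
    have hclall : ∀ x y : Ω, le y x → y = x := by
      intro x y hyx
      obtain ⟨g, hg, hgx⟩ := hprim.1 x₀ x
      have h1 : le ((g⁻¹ : Equiv.Perm Ω) y) ((g⁻¹ : Equiv.Perm Ω) x) :=
        hle_inv g⁻¹ (inv_mem hg) y x hyx
      have h2 : ((g⁻¹ : Equiv.Perm Ω) x) = x₀ := by rw [← hgx]; simp
      rw [h2] at h1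
      have h3 := hx₀ _ h1
      have : y = g x₀ := by
        rw [← h3]; simp
      rw [this, hgx]
    have hT1 : ∀ x : Ω, IsOpen ({x}ᶜ : Set Ω) := by
      intro x
      rw [isOpen_iff_forall_mem_open]
      intro y hy
      have hne : y ≠ x := hy
      have hex : ∃ U : Set Ω, IsOpen U ∧ y ∈ U ∧ x ∉ U := by
        by_contra hno
        push_neg at hno
        exact hne (hclall x y (fun U hU hyU => hno U hU hyU))
      obtain ⟨U, hU, hyU, hxU⟩ := hex
      exact ⟨U, fun z hz hzx => hxU (Set.mem_singleton_iff.mp hzx ▸ hz), hU, hyU⟩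
    exact lemA_aux hT1 hiso n D Set.univ isOpen_univ Set.univ_nonempty
      (by rw [hcover]) hdisc
  · -- no closed points: infinite strictly descending chain, pigeonhole
    push_neg at hcl
    choose f hf hfne using hcl
    obtain ⟨x₀⟩ : Nonempty Ω := inferInstance
    set c : ℕ → Ω := fun k => f^[k] x₀ with hc
    have hstep : ∀ k, le (c (k + 1)) (c k) := by
      intro k
      have : c (k + 1) = f (c k) := Function.iterate_succ_apply' f k x₀
      rw [this]
      exact hf (c k)
    have hchain : ∀ k l, k ≤ l → le (c l) (c k) := by
      intro k l hkl
      induction l, hkl using Nat.le_induction with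
      | base => exact fun U _ h => h
      | succ m hm ihm => exact fun U hU hx => ihm U hU (hstep m U hU hx)
    have hdistinct : ∀ k l, k < l → c k ≠ c l := by
      intro k l hkl heq
      have h1 : le (c l) (c (k + 1)) := hchain (k + 1) l hkl
      have h2 : le (c (k + 1)) (c k) := hstep k
      rw [← heq] at h1
      have h3 : c (k + 1) = c k := antisym _ _ h2 h1
      have : c (k + 1) = f (c k) := Function.iterate_succ_apply' f k x₀
      rw [this] at h3
      exact hfne (c k) h3
    have hmem : ∀ k : ℕ, ∃ i, c k ∈ D i := by
      intro k
      have : c k ∈ ⋃ i, D i := by rw [hcover]; trivial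
      exact Set.mem_iUnion.mp this
    choose idx hidx using hmem
    obtain ⟨k, l, hkl, heq⟩ :=
      Fintype.exists_ne_map_eq_of_card_lt (fun k : Fin (n + 1) => idx k.val)
        (by simp)
    have hklv : (k : ℕ) ≠ (l : ℕ) := fun hv => hkl (Fin.ext hv)
    -- wlog k < l
    rcases hklv.lt_or_gt with hlt | hlt
    all_goals {
      first
      | (obtain ⟨U, hU, hUD⟩ := hdisc (idx (l : ℕ)) (c l) (hidx l)
         have hclU : c (l : ℕ) ∈ U := by
           have : c (l : ℕ) ∈ U ∩ D (idx (l : ℕ)) := by rw [hUD]; rfl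
           exact this.1
         have hckU : c (k : ℕ) ∈ U := hchain _ _ hlt.le U hU hclU
         have hckD : c (k : ℕ) ∈ D (idx (l : ℕ)) := by rw [← heq]; exact hidx k
         have : c (k : ℕ) ∈ U ∩ D (idx (l : ℕ)) := ⟨hckU, hckD⟩
         rw [hUD] at this
         exact hdistinct _ _ hlt this)
      | (obtain ⟨U, hU, hUD⟩ := hdisc (idx (k : ℕ)) (c k) (hidx k)
         have hclU : c (k : ℕ) ∈ U := by
           have : c (k : ℕ) ∈ U ∩ D (idx (k : ℕ)) := by rw [hUD]; rfl
           exact this.1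
         have hckU : c (l : ℕ) ∈ U := hchain _ _ hlt.le U hU hclU
         have hckD : c (l : ℕ) ∈ D (idx (k : ℕ)) := by rw [heq]; exact hidx l
         have : c (l : ℕ) ∈ U ∩ D (idx (k : ℕ)) := ⟨hckU, hckD⟩
         rw [hUD] at this
         exact hdistinct _ _ hlt this)
    }
end

section
/- Every infinite Hausdorff topological space contains an infinite subset whose induced subspace topology is discrete. -/
/-- Key step: in a Hausdorff space, any infinite open set contains a point `x`
with an open neighborhood `U ⊆ s` such that `s \ closure U` is still infinite. -/
lemma exists_point_open_infinite_compl {X : Type*} [TopologicalSpace X] [T2Space X]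
    {s : Set X} (hs : IsOpen s) (hinf : s.Infinite) :
    ∃ x ∈ s, ∃ U : Set X, IsOpen U ∧ x ∈ U ∧ U ⊆ s ∧ (s \ closure U).Infinite := by
  by_cases h : ∃ x ∈ s, ∃ U : Set X, IsOpen U ∧ x ∈ U ∧ U ⊆ s ∧ U.Finite
  · obtain ⟨x, hxs, U, hUo, hxU, hUs, hUfin⟩ := h
    have hxopen : IsOpen ({x} : Set X) := by
      have h1 : IsClosed (U \ {x}) := ((hUfin.subset Set.diff_subset).isClosed)
      have : ({x} : Set X) = U ∩ (U \ {x})ᶜ := by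
        ext y
        simp only [Set.mem_singleton_iff, Set.mem_inter_iff, Set.mem_compl_iff,
          Set.mem_diff, not_and, not_not]
        constructor
        · rintro rfl; exact ⟨hxU, fun _ => rfl⟩
        · rintro ⟨hyU, h2⟩; exact h2 hyU
      rw [this]
      exact hUo.inter h1.isOpen_compl
    refine ⟨x, hxs, {x}, hxopen, rfl, Set.singleton_subset_iff.mpr hxs, ?_⟩
    rw [isClosed_singleton.closure_eq]
    exact hinf.diff (Set.finite_singleton x)
  · push_neg at h
    obtain ⟨a, ha, b, hb, hab⟩ := hinf.nontrivial
    obtain ⟨A, B, hAo, hBo, haA, hbB, hAB⟩ := t2_separation hab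
    refine ⟨a, ha, A ∩ s, hAo.inter hs, ⟨haA, ha⟩, Set.inter_subset_right, ?_⟩
    have hBs : (B ∩ s).Infinite :=
      h b hb (B ∩ s) (hBo.inter hs) ⟨hbB, hb⟩ Set.inter_subset_right
    refine hBs.mono ?_
    rintro y ⟨hyB, hys⟩
    refine ⟨hys, fun hy => ?_⟩
    have hcl : closure (A ∩ s) ⊆ Bᶜ := by
      apply closure_minimal _ hBo.isClosed_compl
      intro z hz hzB
      exact hAB.ne_of_mem hz.1 hzB rfl
    exact hcl hy hyB

/-- Every infinite Hausdorff space contains an infinite subset whose induced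
subspace topology is discrete. -/
theorem exists_infinite_discrete_subset (X : Type*) [TopologicalSpace X] [T2Space X]
    [Infinite X] :
    ∃ D : Set X, D.Infinite ∧ DiscreteTopology D := by
  choose! x hxs U hUo hxU hUs hrec using
    fun (s : Set X) (hs : IsOpen s) (hi : s.Infinite) =>
      exists_point_open_infinite_compl hs hi
  -- the decreasing sequence of infinite open sets
  let s : ℕ → Set X := fun n => Nat.rec Set.univ (fun _ t => t \ closure (U t)) n
  have hs0 : s 0 = Set.univ := rfl
  have hssucc : ∀ n, s (n + 1) = s n \ closure (U (s n)) := fun n => rfl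
  have hgood : ∀ n, IsOpen (s n) ∧ (s n).Infinite := by
    intro n
    induction n with
    | zero => exact ⟨isOpen_univ, Set.infinite_univ⟩
    | succ n ih =>
      rw [hssucc]
      exact ⟨ih.1.sdiff isClosed_closure, hrec _ ih.1 ih.2⟩
  have hxsn : ∀ n, x (s n) ∈ s n := fun n => hxs _ (hgood n).1 (hgood n).2
  have hUon : ∀ n, IsOpen (U (s n)) := fun n => hUo _ (hgood n).1 (hgood n).2
  have hxUn : ∀ n, x (s n) ∈ U (s n) := fun n => hxU _ (hgood n).1 (hgood n).2
  have hUsn : ∀ n, U (s n) ⊆ s n := fun n => hUs _ (hgood n).1 (hgood n).2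
  have hmono : ∀ m n, m ≤ n → s n ⊆ s m := by
    intro m n h
    induction n with
    | zero => rw [Nat.le_zero] at h; subst h; exact fun _ h => h
    | succ n ih =>
      rcases Nat.lt_or_ge m (n + 1) with h' | h'
      · intro y hy
        exact ih (Nat.lt_succ_iff.mp h') (by rw [hssucc] at hy; exact hy.1)
      · have : m = n + 1 := le_antisymm h h'
        subst this; exact fun _ h => h
  -- for m ≠ n, x (s m) ∉ U (s n)
  have hnotmem : ∀ m n, m ≠ n → x (s m) ∉ U (s n) := by
    intro m n hmn hmem
    rcases lt_or_gt_of_ne hmn with h | h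
    · -- m < n : U (s n) ⊆ s n ⊆ s (m+1) = s m \ closure (U (s m))
      have : x (s m) ∈ s (m + 1) := hmono (m + 1) n h (hUsn n hmem)
      rw [hssucc] at this
      exact this.2 (subset_closure (hxUn m))
    · -- n < m : x (s m) ∈ s m ⊆ s (n+1) = s n \ closure (U (s n))
      have : x (s m) ∈ s (n + 1) := hmono (n + 1) m h (hxsn m)
      rw [hssucc] at this
      exact this.2 (subset_closure hmem)
  have hinj : Function.Injective (fun n => x (s n)) := by
    intro m n h
    by_contra hmn
    have h' : x (s m) = x (s n) := h
    exact hnotmem m n hmn (h' ▸ hxUn n)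
  refine ⟨Set.range (fun n => x (s n)), Set.infinite_range_of_injective hinj, ?_⟩
  rw [discreteTopology_iff_isOpen_singleton]
  rintro ⟨d, n, rfl⟩
  have : ({⟨x (s n), n, rfl⟩} : Set (Set.range fun n => x (s n))) =
      Subtype.val ⁻¹' U (s n) := by
    ext ⟨y, m, rfl⟩
    simp only [Set.mem_preimage, Set.mem_singleton_iff, Subtype.mk.injEq]
    constructor
    · intro h
      rw [show x (s m) = x (s n) from congrArg Subtype.val h]; exact hxUn n
    · intro hy
      by_contra hne
      exact hnotmem m n (fun h => hne (by rw [h])) hy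
  rw [this]
  exact (hUon n).preimage continuous_subtype_val
end

section
/- Let Γ be a simple graph on a countably infinite vertex set V in which every finite set of vertices has a common neighbour (for every finite S ⊆ V there is a vertex x adjacent to every vertex of S). Then Γ has a spanning subgraph R (a graph on the same vertex set V with every edge of R an edge of Γ) satisfying the extension property. -/
/-- The sequence of fresh common-neighbour vertices. -/
noncomputable def radoSeq {V : Type*} [DecidableEq V] (Γ : SimpleGraph V)
    (h : ∀ S : Finset V, ∃ x : V, ∀ v ∈ S, Γ.Adj x v)
    (e : ℕ → Finset V × Finset V) : ℕ → V
  | n => (h (((Finset.range (n+1)).biUnion fun k => (e k).1 ∪ (e k).2) ∪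
      (Finset.range n).attach.image fun k => radoSeq Γ h e k.1)).choose
  termination_by n => n
  decreasing_by all_goals exact Finset.mem_range.mp k.2

/-- The forbidden/target set at stage `n`. -/
noncomputable def radoSet {V : Type*} [DecidableEq V] (Γ : SimpleGraph V)
    (h : ∀ S : Finset V, ∃ x : V, ∀ v ∈ S, Γ.Adj x v)
    (e : ℕ → Finset V × Finset V) (n : ℕ) : Finset V :=
  ((Finset.range (n+1)).biUnion fun k => (e k).1 ∪ (e k).2) ∪
      (Finset.range n).image (radoSeq Γ h e)

lemma radoSeq_adj {V : Type*} [DecidableEq V] (Γ : SimpleGraph V)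
    (h : ∀ S : Finset V, ∃ x : V, ∀ v ∈ S, Γ.Adj x v)
    (e : ℕ → Finset V × Finset V) (n : ℕ) :
    ∀ v ∈ radoSet Γ h e n, Γ.Adj (radoSeq Γ h e n) v := by
  have himg : ((Finset.range n).attach.image fun k => radoSeq Γ h e k.1)
      = (Finset.range n).image (radoSeq Γ h e) := by
    ext x
    simp
  rw [radoSet, ← himg, radoSeq.eq_def]
  exact (h _).choose_spec

lemma radoSeq_not_mem {V : Type*} [DecidableEq V] (Γ : SimpleGraph V)
    (h : ∀ S : Finset V, ∃ x : V, ∀ v ∈ S, Γ.Adj x v)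
    (e : ℕ → Finset V × Finset V) (n : ℕ) :
    radoSeq Γ h e n ∉ radoSet Γ h e n := fun hm =>
  Γ.loopless.irrefl _ (radoSeq_adj Γ h e n _ hm)

lemma radoSeq_injective {V : Type*} [DecidableEq V] (Γ : SimpleGraph V)
    (h : ∀ S : Finset V, ∃ x : V, ∀ v ∈ S, Γ.Adj x v)
    (e : ℕ → Finset V × Finset V) : Function.Injective (radoSeq Γ h e) := by
  intro m n hmn
  by_contra hne
  wlog hlt : m < n generalizing m n
  · exact this hmn.symm (Ne.symm hne) (by omega)
  apply radoSeq_not_mem Γ h e n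
  rw [radoSet, ← hmn]
  exact Finset.mem_union_right _ (Finset.mem_image_of_mem _ (Finset.mem_range.mpr hlt))

lemma radoSeq_not_mem_pair {V : Type*} [DecidableEq V] (Γ : SimpleGraph V)
    (h : ∀ S : Finset V, ∃ x : V, ∀ v ∈ S, Γ.Adj x v)
    (e : ℕ → Finset V × Finset V) {k n : ℕ} (hk : k ≤ n) :
    radoSeq Γ h e n ∉ (e k).1 ∪ (e k).2 := by
  intro hm
  apply radoSeq_not_mem Γ h e n
  rw [radoSet]
  exact Finset.mem_union_left _ (Finset.mem_biUnion.mpr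
    ⟨k, Finset.mem_range.mpr (Nat.lt_succ_of_le hk), hm⟩)

/-- A countable graph in which every finite set of vertices has a common neighbour
contains the Rado graph as a spanning subgraph. -/
theorem rado_spanning_subgraph_of_common_neighbours {V : Type*} [Countable V] [Infinite V]
    (Γ : SimpleGraph V) (h : ∀ S : Finset V, ∃ x : V, ∀ v ∈ S, Γ.Adj x v) :
    ∃ R : SimpleGraph V, R ≤ Γ ∧ ExtensionProperty R := by
  haveI : DecidableEq V := Classical.decEq V
  obtain ⟨e, he⟩ := exists_surjective_nat (Finset V × Finset V)
  set z := radoSeq Γ h e with hz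
  have hadj : ∀ n, ∀ u ∈ (e n).1, Γ.Adj (z n) u := by
    intro n u hu
    apply radoSeq_adj Γ h e n
    rw [radoSet]
    exact Finset.mem_union_left _ (Finset.mem_biUnion.mpr
      ⟨n, Finset.mem_range.mpr (Nat.lt_succ_self n), Finset.mem_union_left _ hu⟩)
  refine ⟨{
    Adj := fun a b => ∃ n, (a = z n ∧ b ∈ (e n).1) ∨ (b = z n ∧ a ∈ (e n).1)
    symm := by
      constructor
      intro a b ⟨n, hab⟩
      exact ⟨n, hab.symm⟩
    loopless := by
      constructor
      intro a ⟨n, hab⟩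
      rcases hab with ⟨rfl, hm⟩ | ⟨rfl, hm⟩ <;>
        exact radoSeq_not_mem_pair Γ h e le_rfl (Finset.mem_union_left _ hm)
  }, ?_, ?_⟩
  · intro a b ⟨n, hab⟩
    rcases hab with ⟨rfl, hm⟩ | ⟨rfl, hm⟩
    · exact hadj n b hm
    · exact (hadj n a hm).symm
  · intro U W hUW
    obtain ⟨n, hn⟩ := he (U, W)
    have hU : (e n).1 = U := by rw [hn]
    have hW : (e n).2 = W := by rw [hn]
    have hzn := radoSeq_not_mem_pair Γ h e (le_refl n)
    rw [hU, hW, Finset.mem_union] at hzn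
    push_neg at hzn
    refine ⟨z n, hzn.1, hzn.2, fun u hu => ⟨n, Or.inl ⟨rfl, hU ▸ hu⟩⟩, ?_⟩
    rintro w hw ⟨m, ⟨hzz, hwm⟩ | ⟨rfl, hzm⟩⟩
    · have : m = n := radoSeq_injective Γ h e hzz.symm
      subst this
      rw [hU] at hwm
      exact (Finset.disjoint_left.mp hUW hwm) hw
    · rcases le_or_gt m n with hmn | hmn
      · exact radoSeq_not_mem_pair Γ h e hmn (Finset.mem_union_left _ hzm)
      · exact radoSeq_not_mem_pair Γ h e (le_of_lt hmn)
          (Finset.mem_union_right _ (hW ▸ hw))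
end
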